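/- arXiv:2104.04865 — 9 statements merged into one kernel-verified Lean document; each statement's English description precedes it below -/
import Mathlib

section
/- Let (Z, I, I') be a coupling of probability spaces X and X' with coupling operator P = I'* ∘ I, and let L : L²(X;ℝ) → L²(X;ℝ) and R : L²(X';ℝ) → L²(X';ℝ) be Markov embeddings. Then there exists a Markov embedding T : L²(Z;ℝ) → L²(Z;ℝ) with T ∘ I = I ∘ L and T ∘ I' = I' ∘ R if and only if R* ∘ P ∘ L = P (R* the Hilbert-space adjoint of R). In this case T is unique and satisfies T((If)·(I'g)) = (I(Lf))·(I'(Rg)) for all f ∈ L∞(X;ℝ) and g ∈ L∞(X';ℝ). -/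
open MeasureTheory Filter
open scoped ENNReal RealInnerProductSpace

noncomputable section

/-- The constant-one function as an element of `Lp`. -/
def lpOne {X : Type*} {msX : MeasurableSpace X} (μ : Measure X) (p : ℝ≥0∞) : Lp ℝ p μ := by
  classical exact if h : MemLp (fun _ : X => (1 : ℝ)) p μ then h.toLp _ else 0

/-- An element of `L²` that is (essentially) bounded, i.e. belongs to `L∞`. -/
def BddAE {X : Type*} {msX : MeasurableSpace X} {μ : Measure X} (f : Lp ℝ 2 μ) : Prop :=
  ∃ C : ℝ, ∀ᵐ x ∂μ, |f x| ≤ C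

/-- A Markov operator between the `L²`-spaces of two measure spaces: a positive unital
integral-preserving bounded linear operator. -/
structure MarkovOperator {X Z : Type*} {msX : MeasurableSpace X} {msZ : MeasurableSpace Z}
    (μ : Measure X) (ν : Measure Z) where
  P : Lp ℝ 2 μ →L[ℝ] Lp ℝ 2 ν
  pos : ∀ f : Lp ℝ 2 μ, 0 ≤ f → 0 ≤ P f
  unital : P (lpOne μ 2) = lpOne ν 2
  integral_eq : ∀ f : Lp ℝ 2 μ, ∫ z, P f z ∂ν = ∫ x, f x ∂μ

/-- A Markov embedding between the `L²`-spaces of two measure spaces: a positive unital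
integral-preserving linear isometry commuting with `|·|`. -/
structure MarkovEmbedding {X Z : Type*} {msX : MeasurableSpace X} {msZ : MeasurableSpace Z}
    (μ : Measure X) (ν : Measure Z) where
  J : Lp ℝ 2 μ →ₗᵢ[ℝ] Lp ℝ 2 ν
  pos : ∀ f : Lp ℝ 2 μ, 0 ≤ f → 0 ≤ J f
  unital : J (lpOne μ 2) = lpOne ν 2
  integral_eq : ∀ f : Lp ℝ 2 μ, ∫ z, J f z ∂ν = ∫ x, f x ∂μ
  abs_eq : ∀ f : Lp ℝ 2 μ, J |f| = |J f|

/-- `(Z, I, I')` is a coupling: the span of the products `If · I'g`, for `f, g` bounded,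
is dense in `L²(Z)`. -/
def IsCoupling {X X' Z : Type*} {msX : MeasurableSpace X} {msX' : MeasurableSpace X'}
    {msZ : MeasurableSpace Z} {μ : Measure X} {μ' : Measure X'} {ν : Measure Z}
    (I : MarkovEmbedding μ ν) (I' : MarkovEmbedding μ' ν) : Prop :=
  Dense (Submodule.span ℝ {u : Lp ℝ 2 ν | ∃ (f : Lp ℝ 2 μ) (g : Lp ℝ 2 μ'),
    BddAE f ∧ BddAE g ∧ (u : Z → ℝ) =ᵐ[ν] fun z => I.J f z * I'.J g z} :
      Set (Lp ℝ 2 ν))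

variable {X X' Z : Type*} {msX : MeasurableSpace X} {msX' : MeasurableSpace X'}
  {msZ : MeasurableSpace Z} {μ : Measure X} {μ' : Measure X'} {ν : Measure Z}

/-- `T` intertwines the coupling `(I, I')` with the pair of embeddings `(L, R)`. -/
def Intertwines (I : MarkovEmbedding μ ν) (I' : MarkovEmbedding μ' ν)
    (L : MarkovEmbedding μ μ) (R : MarkovEmbedding μ' μ') (T : MarkovEmbedding ν ν) : Prop :=
  (∀ f : Lp ℝ 2 μ, T.J (I.J f) = I.J (L.J f)) ∧
    ∀ g : Lp ℝ 2 μ', T.J (I'.J g) = I'.J (R.J g)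


section BasicAux
variable {A : Type*} {msA : MeasurableSpace A} {κ : Measure A}

lemma lpOne_coeFn [IsFiniteMeasure κ] : (lpOne κ 2 : A → ℝ) =ᵐ[κ] fun _ => (1:ℝ) := by
  rw [lpOne, dif_pos (memLp_const (1:ℝ))]
  exact MemLp.coeFn_toLp _

lemma aux_inner_eq (u v : Lp ℝ 2 κ) : ⟪u, v⟫ = ∫ z, u z * v z ∂κ := by
  rw [MeasureTheory.L2.inner_def]
  simp [RCLike.inner_apply, starRingEnd_apply]
  simp only [mul_comm]

lemma aux_norm_sq (u : Lp ℝ 2 κ) : ‖u‖^2 = ∫ z, u z * u z ∂κ := by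
  rw [← real_inner_self_eq_norm_sq, aux_inner_eq]

lemma aux_integrable_mul (u v : Lp ℝ 2 κ) : Integrable (fun z => u z * v z) κ := by
  simpa [RCLike.inner_apply, starRingEnd_apply, mul_comm] using
    MeasureTheory.L2.integrable_inner (𝕜 := ℝ) u v

lemma aux_inner_one [IsProbabilityMeasure κ] (u : Lp ℝ 2 κ) :
    ⟪u, lpOne κ 2⟫ = ∫ z, u z ∂κ := by
  rw [aux_inner_eq]
  refine integral_congr_ae ?_
  filter_upwards [lpOne_coeFn (κ := κ)] with z hz
  rw [hz, mul_one]

lemma exists_mul_lp [IsProbabilityMeasure κ] {u v : Lp ℝ 2 κ} {Cu Cv : ℝ}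
    (hu : ∀ᵐ z ∂κ, |u z| ≤ Cu) (hv : ∀ᵐ z ∂κ, |v z| ≤ Cv) :
    ∃ w : Lp ℝ 2 κ, ((w : A → ℝ) =ᵐ[κ] fun z => u z * v z) ∧ ∀ᵐ z ∂κ, |w z| ≤ Cu * Cv := by
  have hCu : 0 ≤ Cu := le_trans (abs_nonneg _) hu.exists.choose_spec
  have hbd : ∀ᵐ z ∂κ, ‖u z * v z‖ ≤ Cu * Cv := by
    filter_upwards [hu, hv] with z h1 h2
    rw [Real.norm_eq_abs, abs_mul]
    exact mul_le_mul h1 h2 (abs_nonneg _) hCu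
  have hm : MemLp (fun z => u z * v z) 2 κ :=
    MemLp.of_bound ((Lp.aestronglyMeasurable u).mul (Lp.aestronglyMeasurable v)) _ hbd
  refine ⟨hm.toLp _, hm.coeFn_toLp, ?_⟩
  filter_upwards [hm.coeFn_toLp, hu, hv] with z h0 h1 h2
  rw [h0, abs_mul]
  exact mul_le_mul h1 h2 (abs_nonneg _) hCu

lemma bddAE_nonneg [IsProbabilityMeasure κ] {u : Lp ℝ 2 κ} (h : BddAE u) :
    ∃ C : ℝ, 0 ≤ C ∧ ∀ᵐ z ∂κ, |u z| ≤ C := by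
  obtain ⟨C, hC⟩ := h
  exact ⟨C, le_trans (abs_nonneg _) hC.exists.choose_spec, hC⟩

lemma aux_norm_le [IsProbabilityMeasure κ] {f : Lp ℝ 2 κ} {C : ℝ} (hC : 0 ≤ C)
    (h : ∀ᵐ z ∂κ, |f z| ≤ C) : ‖f‖ ≤ C := by
  have h2 : ∫ z, f z * f z ∂κ ≤ C^2 := by
    have hint : Integrable (fun z => f z * f z) κ := aux_integrable_mul f f
    calc ∫ z, f z * f z ∂κ ≤ ∫ _, C^2 ∂κ := by
          refine integral_mono_ae hint (integrable_const _) ?_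
          filter_upwards [h] with z hz
          nlinarith [abs_nonneg (f z), sq_abs (f z)]
      _ = C^2 := by simp
  have h3 := aux_norm_sq f
  nlinarith [norm_nonneg f]

end BasicAux

section ExistsPolyAbs

lemma exists_poly_abs {C : ℝ} {ε : ℝ} (hε : 0 < ε) :
    ∃ p : Polynomial ℝ, ∀ x : ℝ, |x| ≤ C → abs (Polynomial.eval x p - abs x) ≤ ε := by
  have hcont : Continuous (fun x : Set.Icc (-C) C => |(x : ℝ)|) :=
    continuous_abs.comp continuous_subtype_val
  set f : C(Set.Icc (-C) C, ℝ) := ⟨_, hcont⟩ with hf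
  have hmem : f ∈ (polynomialFunctions (Set.Icc (-C) C)).topologicalClosure := by
    rw [polynomialFunctions_closure_eq_top (-C) C]; exact Algebra.mem_top
  have hmem2 : f ∈ closure ((polynomialFunctions (Set.Icc (-C) C)) : Set _) := by
    rwa [← Subalgebra.topologicalClosure_coe] at *
  obtain ⟨g, hgmem, hdist⟩ := Metric.mem_closure_iff.mp hmem2 ε hε
  rw [polynomialFunctions_coe] at hgmem
  obtain ⟨p, hp⟩ := hgmem
  refine ⟨p, fun x hx => ?_⟩
  have hx' : x ∈ Set.Icc (-C) C := abs_le.mp hx |> fun h => ⟨h.1, h.2⟩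
  have h1 : dist (f ⟨x, hx'⟩) (g ⟨x, hx'⟩) ≤ dist f g := ContinuousMap.dist_apply_le_dist _
  have h2 : g ⟨x, hx'⟩ = p.eval x := by rw [← hp]; simp
  have h3 : f ⟨x, hx'⟩ = |x| := rfl
  rw [h2, h3, Real.dist_eq] at h1
  rw [abs_sub_comm]
  linarith

end ExistsPolyAbs

section MomentAux
variable {A : Type*} {msA : MeasurableSpace A} {κ : Measure A}

lemma ae_le_of_pow [IsProbabilityMeasure κ] {a : Lp ℝ 2 κ} {C : ℝ} (hC : 0 ≤ C)
    (h : ∀ k : ℕ, ∃ w : Lp ℝ 2 κ, ((w : A → ℝ) =ᵐ[κ] fun z => (a z)^(2^k)) ∧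
      ‖w‖^2 ≤ C^(2^(k+1))) :
    ∀ᵐ z ∂κ, |a z| ≤ C := by
  have hmain : ∀ ε : ℝ, 0 < ε → κ {z | C + ε ≤ |a z|} = 0 := by
    intro ε hε
    set T : ℝ := (κ {z | C + ε ≤ |a z|}).toReal with hT
    have hTbound : ∀ k : ℕ, T ≤ (C / (C + ε))^(2^(k+1)) := by
      intro k
      obtain ⟨w, hw, hwn⟩ := h k
      set m := 2^(k+1) with hm
      have hint : Integrable (fun z => (a z)^m) κ := by
        refine (aux_integrable_mul w w).congr ?_
        filter_upwards [hw] with z hz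
        rw [hz, hm, pow_succ, pow_mul']
        ring
      have hnn : 0 ≤ᵐ[κ] fun z => (a z)^m := by
        refine Filter.Eventually.of_forall fun z => ?_
        have : Even m := ⟨2^k, by rw [hm]; ring⟩
        exact this.pow_nonneg _
      have hintval : ∫ z, (a z)^m ∂κ ≤ C^m := by
        have e1 : ∫ z, (a z)^m ∂κ = ∫ z, w z * w z ∂κ := by
          refine integral_congr_ae ?_
          filter_upwards [hw] with z hz
          rw [hz, hm, pow_succ, pow_mul']; ring
        rw [e1, ← aux_norm_sq w]
        exact hwn
      have hcheb := mul_meas_ge_le_integral_of_nonneg hnn hint ((C+ε)^m)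
      have hsub : {z | C + ε ≤ |a z|} ⊆ {z | (C+ε)^m ≤ (a z)^m} := by
        intro z hz
        have : (C+ε)^m ≤ |a z|^m := pow_le_pow_left₀ (by linarith) hz m
        rwa [Even.pow_abs ⟨2^k, by rw [hm]; ring⟩] at this
      have hmono : (κ {z | C + ε ≤ |a z|}).toReal ≤ (κ {z | (C+ε)^m ≤ (a z)^m}).toReal :=
        ENNReal.toReal_mono (measure_ne_top _ _) (measure_mono hsub)
      have hpos : (0:ℝ) < (C+ε)^m := pow_pos (by linarith) m
      rw [div_pow, le_div_iff₀ hpos]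
      calc T * (C+ε)^m ≤ (κ {z | (C+ε)^m ≤ (a z)^m}).toReal * (C+ε)^m :=
            mul_le_mul_of_nonneg_right hmono (le_of_lt hpos)
        _ = (C+ε)^m * (κ {z | (C+ε)^m ≤ (a z)^m}).toReal := by ring
        _ ≤ ∫ z, (a z)^m ∂κ := hcheb
        _ ≤ C^m := hintval
    have hr0 : 0 ≤ C / (C + ε) := div_nonneg hC (by linarith)
    have hr1 : C / (C + ε) < 1 := by rw [div_lt_one (by linarith)]; linarith
    have hlim : Tendsto (fun k : ℕ => (C / (C + ε))^(2^(k+1))) atTop (nhds 0) :=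
      (tendsto_pow_atTop_nhds_zero_of_lt_one hr0 hr1).comp
        ((tendsto_pow_atTop_atTop_of_one_lt one_lt_two).comp (Filter.tendsto_add_atTop_nat 1))
    have hT0 : T ≤ 0 := ge_of_tendsto hlim (Filter.Eventually.of_forall hTbound)
    have hT0' : T = 0 := le_antisymm hT0 ENNReal.toReal_nonneg
    rcases (ENNReal.toReal_eq_zero_iff _).mp hT0' with h0 | h0
    · exact h0
    · exact absurd h0 (measure_ne_top _ _)
  rw [ae_iff]
  have hsub : {z | ¬ |a z| ≤ C} ⊆ ⋃ n : ℕ, {z | C + 1/(n+1) ≤ |a z|} := by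
    intro z hz
    simp only [Set.mem_setOf_eq, not_le] at hz
    obtain ⟨n, hn⟩ := exists_nat_one_div_lt (sub_pos.mpr hz)
    refine Set.mem_iUnion.mpr ⟨n, ?_⟩
    simp only [Set.mem_setOf_eq]
    linarith
  refine measure_mono_null hsub (measure_iUnion_null fun n => hmain _ ?_)
  positivity

end MomentAux

namespace MarkovEmbedding
variable {A B : Type*} {msA : MeasurableSpace A} {msB : MeasurableSpace B}
  {κ : Measure A} {η : Measure B}

lemma le_map [IsFiniteMeasure κ] [IsFiniteMeasure η] (J : MarkovEmbedding κ η)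
    {g : Lp ℝ 2 κ} {C : ℝ} (hg : ∀ᵐ x ∂κ, g x ≤ C) : ∀ᵐ z ∂η, J.J g z ≤ C := by
  have hq0 : (0 : Lp ℝ 2 κ) ≤ C • lpOne κ 2 - g := by
    rw [← MeasureTheory.Lp.coeFn_nonneg]
    filter_upwards [Lp.coeFn_sub (C • lpOne κ 2) g, Lp.coeFn_smul C (lpOne κ 2),
      lpOne_coeFn (κ := κ), hg] with x e1 e2 e3 e4
    simp only [Pi.zero_apply, e1, Pi.sub_apply, e2, Pi.smul_apply, e3, smul_eq_mul, mul_one]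
    linarith
  have hpos := J.pos _ hq0
  rw [← MeasureTheory.Lp.coeFn_nonneg] at hpos
  have hmap : J.J (C • lpOne κ 2 - g) = C • lpOne η 2 - J.J g := by
    rw [map_sub, _root_.map_smul, J.unital]
  rw [hmap] at hpos
  filter_upwards [hpos, Lp.coeFn_sub (C • lpOne η 2) (J.J g), Lp.coeFn_smul C (lpOne η 2),
    lpOne_coeFn (κ := η)] with z e0 e1 e2 e3
  simp only [Pi.zero_apply, e1, Pi.sub_apply, e2, Pi.smul_apply, e3, smul_eq_mul, mul_one] at e0
  linarith

lemma abs_map_le [IsFiniteMeasure κ] [IsFiniteMeasure η] (J : MarkovEmbedding κ η)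
    {g : Lp ℝ 2 κ} {C : ℝ} (hg : ∀ᵐ x ∂κ, |g x| ≤ C) : ∀ᵐ z ∂η, |J.J g z| ≤ C := by
  have h1 : ∀ᵐ z ∂η, J.J g z ≤ C :=
    J.le_map (by filter_upwards [hg] with x hx; exact (abs_le.mp hx).2)
  have h2 : ∀ᵐ z ∂η, J.J (-g) z ≤ C := J.le_map (by
    filter_upwards [Lp.coeFn_neg g, hg] with x e hx
    rw [e, Pi.neg_apply]; linarith [(abs_le.mp hx).1])
  have h3 : ∀ᵐ z ∂η, -(J.J g z) ≤ C := by
    have e : J.J (-g) = -(J.J g) := map_neg _ _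
    filter_upwards [h2, Lp.coeFn_neg (J.J g)] with z hz e'
    rw [e, e', Pi.neg_apply] at hz; exact hz
  filter_upwards [h1, h3] with z a b
  exact abs_le.mpr ⟨by linarith, a⟩

lemma sq_le (J : MarkovEmbedding κ η) [IsFiniteMeasure κ] [IsFiniteMeasure η] {h h2 : Lp ℝ 2 κ}
    (hh2 : (h2 : A → ℝ) =ᵐ[κ] fun x => h x * h x) :
    ∀ᵐ z ∂η, J.J h z * J.J h z ≤ J.J h2 z := by
  have key : ∀ t : ℚ, ∀ᵐ z ∂η, 0 ≤ J.J h2 z - 2*(t:ℝ)*(J.J h z) + (t:ℝ)^2 := by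
    intro t
    have hq0 : (0 : Lp ℝ 2 κ) ≤ h2 - (2*(t:ℝ)) • h + ((t:ℝ)^2) • lpOne κ 2 := by
      rw [← MeasureTheory.Lp.coeFn_nonneg]
      filter_upwards [Lp.coeFn_add (h2 - (2*(t:ℝ))•h) (((t:ℝ)^2) • lpOne κ 2),
        Lp.coeFn_sub h2 ((2*(t:ℝ))•h), Lp.coeFn_smul (2*(t:ℝ)) h,
        Lp.coeFn_smul ((t:ℝ)^2) (lpOne κ 2), lpOne_coeFn (κ := κ), hh2] with x e1 e2 e3 e4 e5 e6
      simp only [Pi.zero_apply, e1, Pi.add_apply, e2, Pi.sub_apply, e3, e4, Pi.smul_apply, e5,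
        smul_eq_mul, mul_one, e6]
      nlinarith [sq_nonneg (h x - (t:ℝ))]
    have hpos := J.pos _ hq0
    rw [← MeasureTheory.Lp.coeFn_nonneg] at hpos
    have hmap : J.J (h2 - (2*(t:ℝ)) • h + ((t:ℝ)^2) • lpOne κ 2)
        = J.J h2 - (2*(t:ℝ)) • J.J h + ((t:ℝ)^2) • lpOne η 2 := by
      rw [map_add, map_sub, _root_.map_smul, _root_.map_smul, J.unital]
    rw [hmap] at hpos
    filter_upwards [hpos, Lp.coeFn_add (J.J h2 - (2*(t:ℝ))•J.J h) (((t:ℝ)^2) • lpOne η 2),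
      Lp.coeFn_sub (J.J h2) ((2*(t:ℝ))•J.J h), Lp.coeFn_smul (2*(t:ℝ)) (J.J h),
      Lp.coeFn_smul ((t:ℝ)^2) (lpOne η 2), lpOne_coeFn (κ := η)] with z e0 e1 e2 e3 e4 e5
    simp only [Pi.zero_apply, e1, Pi.add_apply, e2, Pi.sub_apply, e3, e4, Pi.smul_apply, e5,
      smul_eq_mul, mul_one] at e0
    linarith
  have hae : ∀ᵐ z ∂η, ∀ t : ℚ, 0 ≤ J.J h2 z - 2*(t:ℝ)*(J.J h z) + (t:ℝ)^2 := ae_all_iff.mpr key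
  filter_upwards [hae] with z H
  set A' := J.J h2 z
  set B := J.J h z
  refine le_of_forall_pos_le_add ?_
  intro ε hε
  obtain ⟨q, hq⟩ := exists_rat_near B (Real.sqrt_pos.mpr hε)
  have h4 : Real.sqrt ε * Real.sqrt ε = ε := Real.mul_self_sqrt hε.le
  have h5 := abs_lt.mp hq
  have h6 := H q
  nlinarith [Real.sqrt_nonneg ε]

lemma map_sq (J : MarkovEmbedding κ η) [IsProbabilityMeasure κ] [IsProbabilityMeasure η]
    {h h2 : Lp ℝ 2 κ} (hh2 : (h2 : A → ℝ) =ᵐ[κ] fun x => h x * h x) :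
    (J.J h2 : B → ℝ) =ᵐ[η] fun z => J.J h z * J.J h z := by
  have hle := J.sq_le hh2
  have hint1 : Integrable (fun z => J.J h2 z) η := (Lp.memLp _).integrable one_le_two
  have hint2 : Integrable (fun z => J.J h z * J.J h z) η := aux_integrable_mul _ _
  have hnn : 0 ≤ᵐ[η] fun z => J.J h2 z - J.J h z * J.J h z := by
    filter_upwards [hle] with z hz; simpa [Pi.zero_apply] using sub_nonneg.mpr hz
  have hzero : ∫ z, (J.J h2 z - J.J h z * J.J h z) ∂η = 0 := by
    rw [integral_sub hint1 hint2]
    have e1 : ∫ z, J.J h2 z ∂η = ∫ x, h2 x ∂κ := J.integral_eq h2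
    have e2 : ∫ x, h2 x ∂κ = ∫ x, h x * h x ∂κ := integral_congr_ae hh2
    have e3 : (∫ x, h x * h x ∂κ) = ‖h‖^2 := (aux_norm_sq h).symm
    have e4 : (∫ z, J.J h z * J.J h z ∂η) = ‖J.J h‖^2 := (aux_norm_sq _).symm
    rw [e1, e2, e3, e4, J.J.norm_map]
    ring
  have hq := (integral_eq_zero_iff_of_nonneg_ae hnn (hint1.sub hint2)).mp hzero
  filter_upwards [hq] with z hz
  simp only [Pi.zero_apply] at hz
  linarith

lemma map_mul (J : MarkovEmbedding κ η) [IsProbabilityMeasure κ] [IsProbabilityMeasure η]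
    {a b w : Lp ℝ 2 κ} {Ca Cb : ℝ}
    (ha : ∀ᵐ x ∂κ, |a x| ≤ Ca) (hb : ∀ᵐ x ∂κ, |b x| ≤ Cb)
    (hw : (w : A → ℝ) =ᵐ[κ] fun x => a x * b x) :
    (J.J w : B → ℝ) =ᵐ[η] fun z => J.J a z * J.J b z := by
  have hCa : 0 ≤ Ca := le_trans (abs_nonneg _) ha.exists.choose_spec
  have hCb : 0 ≤ Cb := le_trans (abs_nonneg _) hb.exists.choose_spec
  have hsb : ∀ᵐ x ∂κ, ‖(a x + b x) * (a x + b x)‖ ≤ (Ca + Cb)^2 := by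
    filter_upwards [ha, hb] with x h1 h2
    rw [Real.norm_eq_abs, abs_mul]
    have h3 : |a x + b x| ≤ Ca + Cb := (abs_add_le _ _).trans (add_le_add h1 h2)
    nlinarith [abs_nonneg (a x + b x)]
  have hdb : ∀ᵐ x ∂κ, ‖(a x - b x) * (a x - b x)‖ ≤ (Ca + Cb)^2 := by
    filter_upwards [ha, hb] with x h1 h2
    rw [Real.norm_eq_abs, abs_mul]
    have h3 : |a x - b x| ≤ Ca + Cb := (abs_sub _ _).trans (add_le_add h1 h2)
    nlinarith [abs_nonneg (a x - b x)]
  have hsm : MemLp (fun x => (a x + b x) * (a x + b x)) 2 κ :=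
    MemLp.of_bound (((Lp.aestronglyMeasurable a).add (Lp.aestronglyMeasurable b)).mul
      ((Lp.aestronglyMeasurable a).add (Lp.aestronglyMeasurable b))) _ hsb
  have hdm : MemLp (fun x => (a x - b x) * (a x - b x)) 2 κ :=
    MemLp.of_bound (((Lp.aestronglyMeasurable a).sub (Lp.aestronglyMeasurable b)).mul
      ((Lp.aestronglyMeasurable a).sub (Lp.aestronglyMeasurable b))) _ hdb
  set s2 : Lp ℝ 2 κ := hsm.toLp _ with hs2
  set d2 : Lp ℝ 2 κ := hdm.toLp _ with hd2
  have hwdef : w = (4:ℝ)⁻¹ • s2 - (4:ℝ)⁻¹ • d2 := by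
    apply MeasureTheory.Lp.ext
    filter_upwards [hw, Lp.coeFn_sub ((4:ℝ)⁻¹ • s2) ((4:ℝ)⁻¹ • d2),
      Lp.coeFn_smul ((4:ℝ)⁻¹) s2, Lp.coeFn_smul ((4:ℝ)⁻¹) d2,
      hsm.coeFn_toLp, hdm.coeFn_toLp] with x e0 e1 e2 e3 e4 e5
    rw [e0, e1, Pi.sub_apply, e2, e3, Pi.smul_apply, Pi.smul_apply, ← hs2, ← hd2] at *
    rw [e4, e5]
    simp only [smul_eq_mul]
    ring
  have hsum : ((a + b : Lp ℝ 2 κ) : A → ℝ) =ᵐ[κ] fun x => a x + b x := by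
    filter_upwards [Lp.coeFn_add a b] with x e; rw [e, Pi.add_apply]
  have hdif : ((a - b : Lp ℝ 2 κ) : A → ℝ) =ᵐ[κ] fun x => a x - b x := by
    filter_upwards [Lp.coeFn_sub a b] with x e; rw [e, Pi.sub_apply]
  have hs2' : (s2 : A → ℝ) =ᵐ[κ] fun x => (a + b : Lp ℝ 2 κ) x * (a + b : Lp ℝ 2 κ) x := by
    filter_upwards [hsm.coeFn_toLp, hsum] with x e1 e2
    rw [hs2] at *; rw [e1, e2]
  have hd2' : (d2 : A → ℝ) =ᵐ[κ] fun x => (a - b : Lp ℝ 2 κ) x * (a - b : Lp ℝ 2 κ) x := by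
    filter_upwards [hdm.coeFn_toLp, hdif] with x e1 e2
    rw [hd2] at *; rw [e1, e2]
  have e1 := J.map_sq hs2'
  have e2 := J.map_sq hd2'
  have hJw : J.J w = (4:ℝ)⁻¹ • J.J s2 - (4:ℝ)⁻¹ • J.J d2 := by
    rw [hwdef, map_sub, _root_.map_smul, _root_.map_smul]
  rw [hJw]
  have hma : J.J (a + b) = J.J a + J.J b := map_add _ _ _
  have hmd : J.J (a - b) = J.J a - J.J b := map_sub _ _ _
  rw [hma] at e1
  rw [hmd] at e2
  filter_upwards [e1, e2, Lp.coeFn_sub ((4:ℝ)⁻¹ • J.J s2) ((4:ℝ)⁻¹ • J.J d2),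
    Lp.coeFn_smul ((4:ℝ)⁻¹) (J.J s2), Lp.coeFn_smul ((4:ℝ)⁻¹) (J.J d2),
    Lp.coeFn_add (J.J a) (J.J b), Lp.coeFn_sub (J.J a) (J.J b)] with z f1 f2 f3 f4 f5 f6 f7
  rw [f3, Pi.sub_apply, f4, f5, Pi.smul_apply, Pi.smul_apply, smul_eq_mul, smul_eq_mul,
    f1, f2, f6, f7, Pi.add_apply, Pi.sub_apply]
  ring

end MarkovEmbedding



section CouplingAux
variable [IsProbabilityMeasure μ] [IsProbabilityMeasure μ'] [IsProbabilityMeasure ν]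

lemma inner_mul_mul (I : MarkovEmbedding μ ν) (I' : MarkovEmbedding μ' ν)
    {f f' : Lp ℝ 2 μ} {g g' : Lp ℝ 2 μ'} {Cf Cf' Cg Cg' : ℝ}
    (hf : ∀ᵐ x ∂μ, |f x| ≤ Cf) (hf' : ∀ᵐ x ∂μ, |f' x| ≤ Cf')
    (hg : ∀ᵐ x ∂μ', |g x| ≤ Cg) (hg' : ∀ᵐ x ∂μ', |g' x| ≤ Cg')
    {u v : Lp ℝ 2 ν}
    (hu : (u : Z → ℝ) =ᵐ[ν] fun z => I.J f z * I'.J g z)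
    (hv : (v : Z → ℝ) =ᵐ[ν] fun z => I.J f' z * I'.J g' z)
    {m : Lp ℝ 2 μ} {n : Lp ℝ 2 μ'}
    (hm : (m : X → ℝ) =ᵐ[μ] fun x => f x * f' x)
    (hn : (n : X' → ℝ) =ᵐ[μ'] fun x => g x * g' x) :
    ⟪u, v⟫ = ⟪I.J m, I'.J n⟫ := by
  rw [aux_inner_eq, aux_inner_eq]
  refine integral_congr_ae ?_
  filter_upwards [hu, hv, I.map_mul hf hf' hm, I'.map_mul hg hg' hn] with z a1 a2 a3 a4
  rw [a1, a2, a3, a4]; ring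

lemma inner_LR (I : MarkovEmbedding μ ν) (I' : MarkovEmbedding μ' ν)
    (L : MarkovEmbedding μ μ) (R : MarkovEmbedding μ' μ')
    (hP : (ContinuousLinearMap.adjoint R.J.toContinuousLinearMap).comp
          (((ContinuousLinearMap.adjoint I'.J.toContinuousLinearMap).comp
              I.J.toContinuousLinearMap).comp L.J.toContinuousLinearMap) =
        (ContinuousLinearMap.adjoint I'.J.toContinuousLinearMap).comp
          I.J.toContinuousLinearMap)
    (m : Lp ℝ 2 μ) (n : Lp ℝ 2 μ') :
    ⟪I.J (L.J m), I'.J (R.J n)⟫ = ⟪I.J m, I'.J n⟫ := by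
  have h0 := congrArg (fun A : Lp ℝ 2 μ →L[ℝ] Lp ℝ 2 μ' => ⟪A m, n⟫) hP
  simp only [ContinuousLinearMap.comp_apply, LinearIsometry.coe_toContinuousLinearMap] at h0
  rw [ContinuousLinearMap.adjoint_inner_left, ContinuousLinearMap.adjoint_inner_left,
      ContinuousLinearMap.adjoint_inner_left] at h0
  simp only [LinearIsometry.coe_toContinuousLinearMap] at h0
  exact h0

lemma gram_eq (I : MarkovEmbedding μ ν) (I' : MarkovEmbedding μ' ν)
    (L : MarkovEmbedding μ μ) (R : MarkovEmbedding μ' μ')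
    (hP : (ContinuousLinearMap.adjoint R.J.toContinuousLinearMap).comp
          (((ContinuousLinearMap.adjoint I'.J.toContinuousLinearMap).comp
              I.J.toContinuousLinearMap).comp L.J.toContinuousLinearMap) =
        (ContinuousLinearMap.adjoint I'.J.toContinuousLinearMap).comp
          I.J.toContinuousLinearMap)
    {f f' : Lp ℝ 2 μ} {g g' : Lp ℝ 2 μ'} {Cf Cf' Cg Cg' : ℝ}
    (hf : ∀ᵐ x ∂μ, |f x| ≤ Cf) (hf' : ∀ᵐ x ∂μ, |f' x| ≤ Cf')
    (hg : ∀ᵐ x ∂μ', |g x| ≤ Cg) (hg' : ∀ᵐ x ∂μ', |g' x| ≤ Cg')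
    {u v w w' : Lp ℝ 2 ν}
    (hu : (u : Z → ℝ) =ᵐ[ν] fun z => I.J f z * I'.J g z)
    (hv : (v : Z → ℝ) =ᵐ[ν] fun z => I.J f' z * I'.J g' z)
    (hw : (w : Z → ℝ) =ᵐ[ν] fun z => I.J (L.J f) z * I'.J (R.J g) z)
    (hw' : (w' : Z → ℝ) =ᵐ[ν] fun z => I.J (L.J f') z * I'.J (R.J g') z) :
    ⟪w, w'⟫ = ⟪u, v⟫ := by
  obtain ⟨m, hm, hmb⟩ := exists_mul_lp hf hf'
  obtain ⟨n, hn, hnb⟩ := exists_mul_lp hg hg'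
  have h1 : ⟪u, v⟫ = ⟪I.J m, I'.J n⟫ := inner_mul_mul I I' hf hf' hg hg' hu hv hm hn
  have h2 : ⟪w, w'⟫ = ⟪I.J (L.J m), I'.J (R.J n)⟫ :=
    inner_mul_mul I I' (L.abs_map_le hf) (L.abs_map_le hf') (R.abs_map_le hg) (R.abs_map_le hg')
      hw hw' (L.map_mul hf hf' hm) (R.map_mul hg hg' hn)
  rw [h1, h2, inner_LR I I' L R hP m n]

lemma prod_formula (I : MarkovEmbedding μ ν) (I' : MarkovEmbedding μ' ν)
    (L : MarkovEmbedding μ μ) (R : MarkovEmbedding μ' μ')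
    (T : MarkovEmbedding ν ν) (hT : Intertwines I I' L R T)
    {f : Lp ℝ 2 μ} {g : Lp ℝ 2 μ'} (hf : BddAE f) (hg : BddAE g)
    {u v : Lp ℝ 2 ν} (hu : (u : Z → ℝ) =ᵐ[ν] fun z => I.J f z * I'.J g z)
    (hv : (v : Z → ℝ) =ᵐ[ν] fun z => I.J (L.J f) z * I'.J (R.J g) z) :
    T.J u = v := by
  obtain ⟨Cf, hCf0, hCf⟩ := bddAE_nonneg hf
  obtain ⟨Cg, hCg0, hCg⟩ := bddAE_nonneg hg
  have h1 := T.map_mul (I.abs_map_le hCf) (I'.abs_map_le hCg) hu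
  refine MeasureTheory.Lp.ext (h1.trans ?_)
  rw [hT.1 f, hT.2 g]
  exact hv.symm

lemma unique_T (I : MarkovEmbedding μ ν) (I' : MarkovEmbedding μ' ν) (hC : IsCoupling I I')
    (L : MarkovEmbedding μ μ) (R : MarkovEmbedding μ' μ')
    (T T' : MarkovEmbedding ν ν)
    (hT : Intertwines I I' L R T) (hT' : Intertwines I I' L R T') : T = T' := by
  have hgen : Set.EqOn ⇑T.J ⇑T'.J {u : Lp ℝ 2 ν | ∃ (f : Lp ℝ 2 μ) (g : Lp ℝ 2 μ'),
      BddAE f ∧ BddAE g ∧ (u : Z → ℝ) =ᵐ[ν] fun z => I.J f z * I'.J g z} := by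
    rintro u ⟨f, g, hf, hg, hu⟩
    obtain ⟨Cf, hCf0, hCf⟩ := bddAE_nonneg hf
    obtain ⟨Cg, hCg0, hCg⟩ := bddAE_nonneg hg
    obtain ⟨v, hv, -⟩ := exists_mul_lp (I.abs_map_le (L.abs_map_le hCf))
      (I'.abs_map_le (R.abs_map_le hCg))
    show T.J u = T'.J u
    rw [prod_formula I I' L R T hT hf hg hu hv, prod_formula I I' L R T' hT' hf hg hu hv]
  have hclosed : IsClosed {u : Lp ℝ 2 ν | T.J u = T'.J u} :=
    isClosed_eq T.J.continuous T'.J.continuous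
  have hall : ∀ u, T.J u = T'.J u := by
    intro u
    have hsub : (Submodule.span ℝ {u : Lp ℝ 2 ν | ∃ (f : Lp ℝ 2 μ) (g : Lp ℝ 2 μ'),
        BddAE f ∧ BddAE g ∧ (u : Z → ℝ) =ᵐ[ν] fun z => I.J f z * I'.J g z} :
        Set (Lp ℝ 2 ν)) ⊆ {u | T.J u = T'.J u} := fun x hx => LinearMap.eqOn_span hgen hx
    have h2 := hclosed.closure_subset_iff.mpr hsub
    rw [hC.closure_eq] at h2
    exact h2 (Set.mem_univ u)
  cases T; cases T'
  congr 1
  exact LinearIsometry.ext hall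

lemma forward_dir (I : MarkovEmbedding μ ν) (I' : MarkovEmbedding μ' ν)
    (L : MarkovEmbedding μ μ) (R : MarkovEmbedding μ' μ')
    (T : MarkovEmbedding ν ν) (hT : Intertwines I I' L R T) :
    (ContinuousLinearMap.adjoint R.J.toContinuousLinearMap).comp
          (((ContinuousLinearMap.adjoint I'.J.toContinuousLinearMap).comp
              I.J.toContinuousLinearMap).comp L.J.toContinuousLinearMap) =
        (ContinuousLinearMap.adjoint I'.J.toContinuousLinearMap).comp
          I.J.toContinuousLinearMap := by
  refine ContinuousLinearMap.ext fun f => ?_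
  refine ext_inner_right ℝ fun g => ?_
  simp only [ContinuousLinearMap.comp_apply, LinearIsometry.coe_toContinuousLinearMap]
  rw [ContinuousLinearMap.adjoint_inner_left, ContinuousLinearMap.adjoint_inner_left,
    ContinuousLinearMap.adjoint_inner_left]
  simp only [LinearIsometry.coe_toContinuousLinearMap]
  rw [← hT.1 f, ← hT.2 g, LinearIsometry.inner_map_map]

end CouplingAux



section RelAux
variable {A : Type*} {msA : MeasurableSpace A} {κ : Measure A}

lemma bddAE_zero : BddAE (0 : Lp ℝ 2 κ) :=
  ⟨0, by filter_upwards [Lp.coeFn_zero (E := ℝ) (p := 2) (μ := κ)] with z e; rw [e]; simp⟩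

lemma BddAE.add' {u v : Lp ℝ 2 κ} (hu : BddAE u) (hv : BddAE v) : BddAE (u + v) := by
  obtain ⟨Cu, hCu⟩ := hu
  obtain ⟨Cv, hCv⟩ := hv
  refine ⟨Cu + Cv, ?_⟩
  filter_upwards [Lp.coeFn_add u v, hCu, hCv] with z e h1 h2
  rw [e, Pi.add_apply]
  exact (abs_add_le _ _).trans (add_le_add h1 h2)

lemma BddAE.smul' {u : Lp ℝ 2 κ} (c : ℝ) (hu : BddAE u) : BddAE (c • u) := by
  obtain ⟨Cu, hCu⟩ := hu
  refine ⟨|c| * Cu, ?_⟩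
  filter_upwards [Lp.coeFn_smul c u, hCu] with z e h1
  rw [e, Pi.smul_apply, smul_eq_mul, abs_mul]
  exact mul_le_mul_of_nonneg_left h1 (abs_nonneg c)

lemma bddAE_lpOne [IsFiniteMeasure κ] : BddAE (lpOne κ 2) :=
  ⟨1, by filter_upwards [lpOne_coeFn (κ := κ)] with z e; rw [e]; simp⟩

lemma bddAE_simpleFunc (f : Lp.simpleFunc ℝ 2 κ) : BddAE (f : Lp ℝ 2 κ) := by
  obtain ⟨C, hC⟩ := (Lp.simpleFunc.toSimpleFunc f).exists_forall_norm_le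
  refine ⟨C, ?_⟩
  filter_upwards [Lp.simpleFunc.toSimpleFunc_eq_toFun f] with x e
  rw [← e, ← Real.norm_eq_abs]
  exact hC x

end RelAux

section RelDef
variable [IsProbabilityMeasure μ] [IsProbabilityMeasure μ'] [IsProbabilityMeasure ν]

/-- auxiliary relation: `w` is the prescribed image of the generator `s`. -/
def RelP (I : MarkovEmbedding μ ν) (I' : MarkovEmbedding μ' ν)
    (L : MarkovEmbedding μ μ) (R : MarkovEmbedding μ' μ') (s w : Lp ℝ 2 ν) : Prop :=
  ∃ (f : Lp ℝ 2 μ) (g : Lp ℝ 2 μ'), BddAE f ∧ BddAE g ∧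
    ((s : Z → ℝ) =ᵐ[ν] fun z => I.J f z * I'.J g z) ∧
    ((w : Z → ℝ) =ᵐ[ν] fun z => I.J (L.J f) z * I'.J (R.J g) z)

lemma rel_total (I : MarkovEmbedding μ ν) (I' : MarkovEmbedding μ' ν)
    (L : MarkovEmbedding μ μ) (R : MarkovEmbedding μ' μ')
    {s : Lp ℝ 2 ν} (hs : ∃ (f : Lp ℝ 2 μ) (g : Lp ℝ 2 μ'), BddAE f ∧ BddAE g ∧
      (s : Z → ℝ) =ᵐ[ν] fun z => I.J f z * I'.J g z) :
    ∃ w : Lp ℝ 2 ν, (∃ (f : Lp ℝ 2 μ) (g : Lp ℝ 2 μ'), BddAE f ∧ BddAE g ∧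
      (w : Z → ℝ) =ᵐ[ν] fun z => I.J f z * I'.J g z) ∧ RelP I I' L R s w := by
  obtain ⟨f, g, hf, hg, hsrep⟩ := hs
  obtain ⟨Cf, hCf0, hCf⟩ := bddAE_nonneg hf
  obtain ⟨Cg, hCg0, hCg⟩ := bddAE_nonneg hg
  obtain ⟨w, hw, -⟩ := exists_mul_lp (I.abs_map_le (L.abs_map_le hCf))
    (I'.abs_map_le (R.abs_map_le hCg))
  exact ⟨w, ⟨L.J f, R.J g, ⟨Cf, L.abs_map_le hCf⟩, ⟨Cg, R.abs_map_le hCg⟩, hw⟩,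
    ⟨f, g, hf, hg, hsrep, hw⟩⟩

lemma rel_gram (I : MarkovEmbedding μ ν) (I' : MarkovEmbedding μ' ν)
    (L : MarkovEmbedding μ μ) (R : MarkovEmbedding μ' μ')
    (hP : (ContinuousLinearMap.adjoint R.J.toContinuousLinearMap).comp
          (((ContinuousLinearMap.adjoint I'.J.toContinuousLinearMap).comp
              I.J.toContinuousLinearMap).comp L.J.toContinuousLinearMap) =
        (ContinuousLinearMap.adjoint I'.J.toContinuousLinearMap).comp
          I.J.toContinuousLinearMap)
    {s w s' w' : Lp ℝ 2 ν} (h1 : RelP I I' L R s w) (h2 : RelP I I' L R s' w') :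
    ⟪w, w'⟫ = ⟪s, s'⟫ := by
  obtain ⟨f, g, hf, hg, hs, hw⟩ := h1
  obtain ⟨f', g', hf', hg', hs', hw'⟩ := h2
  obtain ⟨Cf, hCf0, hCf⟩ := bddAE_nonneg hf
  obtain ⟨Cg, hCg0, hCg⟩ := bddAE_nonneg hg
  obtain ⟨Cf', hCf'0, hCf'⟩ := bddAE_nonneg hf'
  obtain ⟨Cg', hCg'0, hCg'⟩ := bddAE_nonneg hg'
  exact gram_eq I I' L R hP hCf hCf' hCg hCg' hs hs' hw hw'

lemma rel_unique (I : MarkovEmbedding μ ν) (I' : MarkovEmbedding μ' ν)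
    (L : MarkovEmbedding μ μ) (R : MarkovEmbedding μ' μ')
    (hP : (ContinuousLinearMap.adjoint R.J.toContinuousLinearMap).comp
          (((ContinuousLinearMap.adjoint I'.J.toContinuousLinearMap).comp
              I.J.toContinuousLinearMap).comp L.J.toContinuousLinearMap) =
        (ContinuousLinearMap.adjoint I'.J.toContinuousLinearMap).comp
          I.J.toContinuousLinearMap)
    {s w w' : Lp ℝ 2 ν} (h1 : RelP I I' L R s w) (h2 : RelP I I' L R s w') :
    w = w' := by
  have e1 : ⟪w, w'⟫ = ⟪s, s⟫ := rel_gram I I' L R hP h1 h2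
  have e2 : ⟪w, w⟫ = ⟪s, s⟫ := rel_gram I I' L R hP h1 h1
  have e3 : ⟪w', w'⟫ = ⟪s, s⟫ := rel_gram I I' L R hP h2 h2
  have h4 : ‖w - w'‖^2 = 0 := by
    rw [norm_sub_sq_real]
    rw [← real_inner_self_eq_norm_sq, ← real_inner_self_eq_norm_sq, e1, e2, e3]
    ring
  have h5 : ‖w - w'‖ = 0 := by
    have := sq_eq_zero_iff.mp h4
    exact this
  rw [← sub_eq_zero]
  exact norm_eq_zero.mp h5

end RelDef



section ExistenceConstruction
variable [IsProbabilityMeasure μ] [IsProbabilityMeasure μ'] [IsProbabilityMeasure ν]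

set_option maxHeartbeats 4000000 in
lemma exists_T (I : MarkovEmbedding μ ν) (I' : MarkovEmbedding μ' ν) (hC : IsCoupling I I')
    (L : MarkovEmbedding μ μ) (R : MarkovEmbedding μ' μ')
    (hP : (ContinuousLinearMap.adjoint R.J.toContinuousLinearMap).comp
          (((ContinuousLinearMap.adjoint I'.J.toContinuousLinearMap).comp
              I.J.toContinuousLinearMap).comp L.J.toContinuousLinearMap) =
        (ContinuousLinearMap.adjoint I'.J.toContinuousLinearMap).comp
          I.J.toContinuousLinearMap) :
    ∃ T : MarkovEmbedding ν ν, Intertwines I I' L R T := by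
  classical
  set S : Set (Lp ℝ 2 ν) := {u : Lp ℝ 2 ν | ∃ (f : Lp ℝ 2 μ) (g : Lp ℝ 2 μ'),
    BddAE f ∧ BddAE g ∧ (u : Z → ℝ) =ᵐ[ν] fun z => I.J f z * I'.J g z} with hSdef
  -- chosen images of generators
  have hphi0 : ∀ s : ↥S, ∃ w : Lp ℝ 2 ν, w ∈ S ∧ RelP I I' L R (s : Lp ℝ 2 ν) w := by
    rintro ⟨s, hs⟩
    obtain ⟨w, hwS, hwrel⟩ := rel_total I I' L R hs
    exact ⟨w, hwS, hwrel⟩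
  choose phi hphiS hphiRel using hphi0
  set F : (↥S →₀ ℝ) →ₗ[ℝ] Lp ℝ 2 ν := Finsupp.linearCombination ℝ phi with hFdef
  set E : (↥S →₀ ℝ) →ₗ[ℝ] Lp ℝ 2 ν :=
    Finsupp.linearCombination ℝ (fun s : ↥S => (s : Lp ℝ 2 ν)) with hEdef
  have hkey : ∀ s s' : ↥S, ⟪phi s, phi s'⟫ = ⟪(s : Lp ℝ 2 ν), (s' : Lp ℝ 2 ν)⟫ :=
    fun s s' => rel_gram I I' L R hP (hphiRel s) (hphiRel s')
  have expand : ∀ (v v' : ↥S → Lp ℝ 2 ν) (l l' : ↥S →₀ ℝ),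
      ⟪Finsupp.linearCombination ℝ v l, Finsupp.linearCombination ℝ v' l'⟫
        = ∑ a ∈ l.support, ∑ b ∈ l'.support, l a * l' b * ⟪v a, v' b⟫ := by
    intro v v' l l'
    rw [Finsupp.linearCombination_apply, Finsupp.linearCombination_apply, Finsupp.sum,
      Finsupp.sum, sum_inner]
    refine Finset.sum_congr rfl fun a _ => ?_
    rw [real_inner_smul_left, inner_sum, Finset.mul_sum]
    refine Finset.sum_congr rfl fun b _ => ?_
    rw [real_inner_smul_right]; ring
  have hinner : ∀ l l' : ↥S →₀ ℝ, ⟪F l, F l'⟫ = ⟪E l, E l'⟫ := by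
    intro l l'
    rw [hFdef, hEdef, expand, expand]
    exact Finset.sum_congr rfl fun a _ => Finset.sum_congr rfl fun b _ => by rw [hkey]
  have hnormFE : ∀ l, ‖F l‖ = ‖E l‖ := by
    intro l
    have h1 : ‖F l‖^2 = ‖E l‖^2 := by
      rw [← real_inner_self_eq_norm_sq, ← real_inner_self_eq_norm_sq, hinner]
    nlinarith [norm_nonneg (F l), norm_nonneg (E l)]
  have hker : LinearMap.ker E ≤ LinearMap.ker F := by
    intro l hl
    rw [LinearMap.mem_ker] at hl ⊢
    have h0 := hnormFE l
    rw [hl, norm_zero] at h0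
    exact norm_eq_zero.mp h0
  have hrangeE : LinearMap.range E = Submodule.span ℝ S := by
    rw [hEdef, Finsupp.range_linearCombination, Subtype.range_coe]
  set T0 : ↥(LinearMap.range E) →ₗ[ℝ] Lp ℝ 2 ν :=
    (Submodule.liftQ (LinearMap.ker E) F hker).comp
      (LinearMap.quotKerEquivRange E).symm.toLinearMap with hT0def
  have hT0 : ∀ (l : ↥S →₀ ℝ) (hm : E l ∈ LinearMap.range E), T0 ⟨E l, hm⟩ = F l := by
    intro l hm
    have h1 : (LinearMap.quotKerEquivRange E).symm ⟨E l, hm⟩ = Submodule.Quotient.mk l := by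
      rw [LinearMap.quotKerEquivRange_symm_apply_image, Submodule.mkQ_apply]
    rw [hT0def]
    simp only [LinearMap.comp_apply, LinearEquiv.coe_toLinearMap]
    rw [h1, Submodule.liftQ_apply]
  have hT0' : ∀ (x : ↥(LinearMap.range E)) (l : ↥S →₀ ℝ), E l = (x : Lp ℝ 2 ν) → T0 x = F l := by
    rintro ⟨x, hx⟩ l h
    simp only at h
    subst h
    exact hT0 l hx
  have hT0norm : ∀ x : ↥(LinearMap.range E), ‖T0 x‖ = ‖x‖ := by
    rintro ⟨x, hx⟩
    obtain ⟨l, hl⟩ := id hx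
    rw [hT0' ⟨x, _⟩ l hl]
    show ‖F l‖ = ‖x‖
    rw [hnormFE l, hl]
  set T0iso : ↥(LinearMap.range E) →ₗᵢ[ℝ] Lp ℝ 2 ν := ⟨T0, hT0norm⟩ with hT0iso
  set e : ↥(LinearMap.range E) →L[ℝ] Lp ℝ 2 ν := (LinearMap.range E).subtypeL with hedef
  have he_coe : ⇑e = (Subtype.val : ↥(LinearMap.range E) → Lp ℝ 2 ν) := rfl
  have he_iso : Isometry ⇑e := by rw [he_coe]; exact isometry_subtype_coe
  have hdense : DenseRange ⇑e := by
    rw [DenseRange, he_coe, Subtype.range_coe, hrangeE]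
    exact hC
  set That : Lp ℝ 2 ν →L[ℝ] Lp ℝ 2 ν :=
    T0iso.toContinuousLinearMap.extend e with hThatdef
  have hThat_e : ∀ x, That (e x) = T0 x := fun x =>
    ContinuousLinearMap.extend_eq _ hdense he_iso.isUniformInducing x
  have hnorm : ∀ u, ‖That u‖ = ‖u‖ := by
    have hcl : IsClosed {u : Lp ℝ 2 ν | ‖That u‖ = ‖u‖} :=
      isClosed_eq (continuous_norm.comp That.continuous) continuous_norm
    have hsub : Set.range ⇑e ⊆ {u | ‖That u‖ = ‖u‖} := by
      rintro - ⟨x, rfl⟩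
      show ‖That (e x)‖ = ‖e x‖
      rw [hThat_e x]
      calc ‖T0 x‖ = ‖x‖ := hT0norm x
        _ = ‖e x‖ := rfl
    intro u
    have h2 := hcl.closure_subset_iff.mpr hsub
    rw [hdense.closure_eq] at h2
    exact h2 (Set.mem_univ u)
  set Tl : Lp ℝ 2 ν →ₗᵢ[ℝ] Lp ℝ 2 ν := ⟨That.toLinearMap, hnorm⟩ with hTldef
  have hTl_coe : ∀ u, Tl u = That u := fun _ => rfl
  -- value of Tl on generators, for arbitrary representations
  have hsval : ∀ s w : Lp ℝ 2 ν, RelP I I' L R s w → Tl s = w := by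
    intro s w hrel
    have hsS : s ∈ S := by
      obtain ⟨f, g, hf, hg, hs, -⟩ := hrel
      exact ⟨f, g, hf, hg, hs⟩
    have hEl : E (Finsupp.single ⟨s, hsS⟩ (1:ℝ)) = s := by
      rw [hEdef, Finsupp.linearCombination_single, one_smul]
    have hmem : s ∈ LinearMap.range E := ⟨Finsupp.single ⟨s, hsS⟩ (1:ℝ), hEl⟩
    have h1 : Tl s = T0 ⟨s, hmem⟩ := by
      rw [hTl_coe]
      have h0 : s = e (⟨s, hmem⟩ : ↥(LinearMap.range E)) := rfl
      conv_lhs => rw [h0]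
      rw [hThat_e]
    have h2 : T0 ⟨s, hmem⟩ = F (Finsupp.single ⟨s, hsS⟩ (1:ℝ)) := hT0' _ _ hEl
    have h3 : F (Finsupp.single ⟨s, hsS⟩ (1:ℝ)) = phi ⟨s, hsS⟩ := by
      rw [hFdef, Finsupp.linearCombination_single, one_smul]
    have h4 : Tl s = phi ⟨s, hsS⟩ := by rw [h1, h2, h3]
    rw [h4]
    exact rel_unique I I' L R hP (hphiRel ⟨s, hsS⟩) hrel
  -- boundedness of generators
  have hSbdd : ∀ s ∈ S, BddAE s := by
    rintro s ⟨f, g, hf, hg, hsrep⟩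
    obtain ⟨Cf, hCf0, hCf⟩ := bddAE_nonneg hf
    obtain ⟨Cg, hCg0, hCg⟩ := bddAE_nonneg hg
    refine ⟨Cf * Cg, ?_⟩
    filter_upwards [hsrep, I.abs_map_le hCf, I'.abs_map_le hCg] with z e1 e2 e3
    rw [e1, abs_mul]
    exact mul_le_mul e2 e3 (abs_nonneg _) hCf0
  have hgood : ∀ u ∈ Submodule.span ℝ S, BddAE u ∧ BddAE (Tl u) := by
    intro u hu
    induction hu using Submodule.span_induction with
    | mem x hx =>
      refine ⟨hSbdd x hx, ?_⟩
      rw [hsval x (phi ⟨x, hx⟩) (hphiRel ⟨x, hx⟩)]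
      exact hSbdd _ (hphiS ⟨x, hx⟩)
    | zero => exact ⟨bddAE_zero, by rw [map_zero]; exact bddAE_zero⟩
    | add x y hx hy ihx ihy =>
      exact ⟨ihx.1.add' ihy.1, by rw [map_add]; exact ihx.2.add' ihy.2⟩
    | smul a x hx ihx =>
      exact ⟨ihx.1.smul' a, by rw [_root_.map_smul]; exact ihx.2.smul' a⟩
  -- multiplicativity of Tl on the span
  have hmul : ∀ u ∈ Submodule.span ℝ S, ∀ v ∈ Submodule.span ℝ S,
      ∃ w ∈ Submodule.span ℝ S, ((w : Z → ℝ) =ᵐ[ν] fun z => u z * v z) ∧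
        ((Tl w : Z → ℝ) =ᵐ[ν] fun z => Tl u z * Tl v z) := by
    intro u hu
    induction hu using Submodule.span_induction with
    | mem s hs =>
      intro v hv
      induction hv using Submodule.span_induction with
      | mem s' hs' =>
        obtain ⟨f, g, hf, hg, hsrep⟩ := hs
        obtain ⟨f', g', hf', hg', hs'rep⟩ := hs'
        obtain ⟨Cf, hCf0, hCf⟩ := bddAE_nonneg hf
        obtain ⟨Cg, hCg0, hCg⟩ := bddAE_nonneg hg
        obtain ⟨Cf', hCf'0, hCf'⟩ := bddAE_nonneg hf'
        obtain ⟨Cg', hCg'0, hCg'⟩ := bddAE_nonneg hg'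
        obtain ⟨m, hm, hmB⟩ := exists_mul_lp hCf hCf'
        obtain ⟨n, hn, hnB⟩ := exists_mul_lp hCg hCg'
        obtain ⟨w, hw, -⟩ := exists_mul_lp (I.abs_map_le hmB) (I'.abs_map_le hnB)
        have hwS : w ∈ S := ⟨m, n, ⟨_, hmB⟩, ⟨_, hnB⟩, hw⟩
        obtain ⟨w2, hw2, -⟩ := exists_mul_lp (I.abs_map_le (L.abs_map_le hmB))
          (I'.abs_map_le (R.abs_map_le hnB))
        have hrelw : RelP I I' L R w w2 := ⟨m, n, ⟨_, hmB⟩, ⟨_, hnB⟩, hw, hw2⟩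
        obtain ⟨ws, hws, -⟩ := exists_mul_lp (I.abs_map_le (L.abs_map_le hCf))
          (I'.abs_map_le (R.abs_map_le hCg))
        obtain ⟨ws', hws', -⟩ := exists_mul_lp (I.abs_map_le (L.abs_map_le hCf'))
          (I'.abs_map_le (R.abs_map_le hCg'))
        have hTls : Tl s = ws := hsval s ws ⟨f, g, hf, hg, hsrep, hws⟩
        have hTls' : Tl s' = ws' := hsval s' ws' ⟨f', g', hf', hg', hs'rep, hws'⟩
        have hTlw : Tl w = w2 := hsval w w2 hrelw
        refine ⟨w, Submodule.subset_span hwS, ?_, ?_⟩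
        · filter_upwards [hw, I.map_mul hCf hCf' hm, I'.map_mul hCg hCg' hn, hsrep, hs'rep]
            with z e1 e2 e3 e4 e5
          rw [e1, e2, e3, e4, e5]; ring
        · rw [hTlw, hTls, hTls']
          filter_upwards [hw2,
            I.map_mul (L.abs_map_le hCf) (L.abs_map_le hCf') (L.map_mul hCf hCf' hm),
            I'.map_mul (R.abs_map_le hCg) (R.abs_map_le hCg') (R.map_mul hCg hCg' hn),
            hws, hws'] with z e1 e2 e3 e4 e5
          rw [e1, e2, e3, e4, e5]; ring
      | zero =>
        refine ⟨0, Submodule.zero_mem _, ?_, ?_⟩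
        · filter_upwards [Lp.coeFn_zero (E := ℝ) (p := 2) (μ := ν)] with z e
          rw [e]; simp
        · rw [map_zero]
          filter_upwards [Lp.coeFn_zero (E := ℝ) (p := 2) (μ := ν)] with z e
          rw [e]; simp
      | add v₁ v₂ hv₁ hv₂ ih₁ ih₂ =>
        obtain ⟨w₁, hw₁span, hw₁, hTw₁⟩ := ih₁
        obtain ⟨w₂, hw₂span, hw₂, hTw₂⟩ := ih₂
        refine ⟨w₁ + w₂, Submodule.add_mem _ hw₁span hw₂span, ?_, ?_⟩
        · filter_upwards [Lp.coeFn_add w₁ w₂, hw₁, hw₂, Lp.coeFn_add v₁ v₂] with z e1 e2 e3 e4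
          rw [e1, Pi.add_apply, e2, e3, e4, Pi.add_apply]; ring
        · have hv12 : Tl (v₁ + v₂) = Tl v₁ + Tl v₂ := map_add _ _ _
          rw [map_add, hv12]
          filter_upwards [Lp.coeFn_add (Tl w₁) (Tl w₂), hTw₁, hTw₂,
            Lp.coeFn_add (Tl v₁) (Tl v₂)] with z e1 e2 e3 e4
          rw [e1, Pi.add_apply, e2, e3, e4, Pi.add_apply]; ring
      | smul a v hv ih =>
        obtain ⟨w, hwspan, hw, hTw⟩ := ih
        refine ⟨a • w, Submodule.smul_mem _ a hwspan, ?_, ?_⟩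
        · filter_upwards [Lp.coeFn_smul a w, hw, Lp.coeFn_smul a v] with z e1 e2 e3
          rw [e1, Pi.smul_apply, smul_eq_mul, e2, e3, Pi.smul_apply, smul_eq_mul]; ring
        · have hv2 : Tl (a • v) = a • Tl v := _root_.map_smul _ _ _
          rw [_root_.map_smul, hv2]
          filter_upwards [Lp.coeFn_smul a (Tl w), hTw, Lp.coeFn_smul a (Tl v)]
            with z e1 e2 e3
          rw [e1, Pi.smul_apply, smul_eq_mul, e2, e3, Pi.smul_apply, smul_eq_mul]; ring
    | zero =>
      intro v hv
      refine ⟨0, Submodule.zero_mem _, ?_, ?_⟩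
      · filter_upwards [Lp.coeFn_zero (E := ℝ) (p := 2) (μ := ν)] with z e
        rw [e]; simp
      · rw [map_zero]
        filter_upwards [Lp.coeFn_zero (E := ℝ) (p := 2) (μ := ν)] with z e
        rw [e]; simp
    | add u₁ u₂ hu₁ hu₂ ih₁ ih₂ =>
      intro v hv
      obtain ⟨w₁, hw₁span, hw₁, hTw₁⟩ := ih₁ v hv
      obtain ⟨w₂, hw₂span, hw₂, hTw₂⟩ := ih₂ v hv
      refine ⟨w₁ + w₂, Submodule.add_mem _ hw₁span hw₂span, ?_, ?_⟩
      · filter_upwards [Lp.coeFn_add w₁ w₂, hw₁, hw₂, Lp.coeFn_add u₁ u₂] with z e1 e2 e3 e4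
        rw [e1, Pi.add_apply, e2, e3, e4, Pi.add_apply]; ring
      · have hu12 : Tl (u₁ + u₂) = Tl u₁ + Tl u₂ := map_add _ _ _
        rw [map_add, hu12]
        filter_upwards [Lp.coeFn_add (Tl w₁) (Tl w₂), hTw₁, hTw₂,
          Lp.coeFn_add (Tl u₁) (Tl u₂)] with z e1 e2 e3 e4
        rw [e1, Pi.add_apply, e2, e3, e4, Pi.add_apply]; ring
    | smul a u' hu' ih =>
      intro v hv
      obtain ⟨w, hwspan, hw, hTw⟩ := ih v hv
      refine ⟨a • w, Submodule.smul_mem _ a hwspan, ?_, ?_⟩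
      · filter_upwards [Lp.coeFn_smul a w, hw, Lp.coeFn_smul a u'] with z e1 e2 e3
        rw [e1, Pi.smul_apply, smul_eq_mul, e2, e3, Pi.smul_apply, smul_eq_mul]; ring
      · have hu2 : Tl (a • u') = a • Tl u' := _root_.map_smul _ _ _
        rw [_root_.map_smul, hu2]
        filter_upwards [Lp.coeFn_smul a (Tl w), hTw, Lp.coeFn_smul a (Tl u')]
          with z e1 e2 e3
        rw [e1, Pi.smul_apply, smul_eq_mul, e2, e3, Pi.smul_apply, smul_eq_mul]; ring
  -- the constant one
  have hrep1 : ((lpOne ν 2 : Lp ℝ 2 ν) : Z → ℝ)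
      =ᵐ[ν] fun z => I.J (lpOne μ 2) z * I'.J (lpOne μ' 2) z := by
    have e1 : (I.J (lpOne μ 2) : Z → ℝ) =ᵐ[ν] fun _ => (1:ℝ) := by
      rw [I.unital]; exact lpOne_coeFn
    have e2 : (I'.J (lpOne μ' 2) : Z → ℝ) =ᵐ[ν] fun _ => (1:ℝ) := by
      rw [I'.unital]; exact lpOne_coeFn
    filter_upwards [lpOne_coeFn (κ := ν), e1, e2] with z a1 a2 a3
    rw [a1, a2, a3, mul_one]
  have hS1 : lpOne ν 2 ∈ S := ⟨lpOne μ 2, lpOne μ' 2, bddAE_lpOne, bddAE_lpOne, hrep1⟩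
  have hone : Tl (lpOne ν 2) = lpOne ν 2 := by
    refine hsval _ _ ⟨lpOne μ 2, lpOne μ' 2, bddAE_lpOne, bddAE_lpOne, hrep1, ?_⟩
    rw [L.unital, R.unital]
    exact hrep1
  -- powers
  have hpow : ∀ u ∈ Submodule.span ℝ S, ∀ n : ℕ,
      ∃ w ∈ Submodule.span ℝ S, ((w : Z → ℝ) =ᵐ[ν] fun z => (u z)^n) ∧
        ((Tl w : Z → ℝ) =ᵐ[ν] fun z => (Tl u z)^n) := by
    intro u hu n
    induction n with
    | zero =>
      refine ⟨lpOne ν 2, Submodule.subset_span hS1, ?_, ?_⟩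
      · filter_upwards [lpOne_coeFn (κ := ν)] with z e
        rw [e, pow_zero]
      · rw [hone]
        filter_upwards [lpOne_coeFn (κ := ν)] with z e
        rw [e, pow_zero]
    | succ n ih =>
      obtain ⟨w, hwspan, hw1, hw2⟩ := ih
      obtain ⟨w', hw'span, hw'1, hw'2⟩ := hmul w hwspan u hu
      refine ⟨w', hw'span, ?_, ?_⟩
      · filter_upwards [hw'1, hw1] with z e1 e2
        rw [e1, e2, pow_succ]
      · filter_upwards [hw'2, hw2] with z e1 e2
        rw [e1, e2, pow_succ]
  -- polynomials
  have hpoly : ∀ u ∈ Submodule.span ℝ S, ∀ p : Polynomial ℝ,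
      ∃ w ∈ Submodule.span ℝ S, ((w : Z → ℝ) =ᵐ[ν] fun z => p.eval (u z)) ∧
        ((Tl w : Z → ℝ) =ᵐ[ν] fun z => p.eval (Tl u z)) := by
    intro u hu p
    induction p using Polynomial.induction_on with
    | C a =>
      refine ⟨a • lpOne ν 2, Submodule.smul_mem _ a (Submodule.subset_span hS1), ?_, ?_⟩
      · filter_upwards [Lp.coeFn_smul a (lpOne ν 2), lpOne_coeFn (κ := ν)] with z e1 e2
        rw [e1, Pi.smul_apply, e2, smul_eq_mul, mul_one, Polynomial.eval_C]
      · rw [_root_.map_smul, hone]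
        filter_upwards [Lp.coeFn_smul a (lpOne ν 2), lpOne_coeFn (κ := ν)] with z e1 e2
        rw [e1, Pi.smul_apply, e2, smul_eq_mul, mul_one, Polynomial.eval_C]
    | add p q ihp ihq =>
      obtain ⟨w₁, hw₁span, hw₁, hTw₁⟩ := ihp
      obtain ⟨w₂, hw₂span, hw₂, hTw₂⟩ := ihq
      refine ⟨w₁ + w₂, Submodule.add_mem _ hw₁span hw₂span, ?_, ?_⟩
      · filter_upwards [Lp.coeFn_add w₁ w₂, hw₁, hw₂] with z e1 e2 e3
        rw [e1, Pi.add_apply, e2, e3, Polynomial.eval_add]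
      · rw [map_add]
        filter_upwards [Lp.coeFn_add (Tl w₁) (Tl w₂), hTw₁, hTw₂] with z e1 e2 e3
        rw [e1, Pi.add_apply, e2, e3, Polynomial.eval_add]
    | monomial n a _ =>
      obtain ⟨w, hwspan, hw1, hw2⟩ := hpow u hu (n + 1)
      refine ⟨a • w, Submodule.smul_mem _ a hwspan, ?_, ?_⟩
      · filter_upwards [Lp.coeFn_smul a w, hw1] with z e1 e2
        rw [e1, Pi.smul_apply, smul_eq_mul, e2]
        simp [Polynomial.eval_mul, Polynomial.eval_pow]
      · rw [_root_.map_smul]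
        filter_upwards [Lp.coeFn_smul a (Tl w), hw2] with z e1 e2
        rw [e1, Pi.smul_apply, smul_eq_mul, e2]
        simp [Polynomial.eval_mul, Polynomial.eval_pow]
  -- boundedness of Tl on the span
  have hTbdd : ∀ u ∈ Submodule.span ℝ S, ∀ C : ℝ, 0 ≤ C → (∀ᵐ z ∂ν, |u z| ≤ C) →
      (∀ᵐ z ∂ν, |Tl u z| ≤ C) := by
    intro u hu C hC hbd
    refine ae_le_of_pow hC ?_
    intro k
    obtain ⟨w, hwspan, hw1, hw2⟩ := hpow u hu (2^k)
    refine ⟨Tl w, hw2, ?_⟩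
    have h1 : ‖Tl w‖ = ‖w‖ := Tl.norm_map w
    have hwb : ∀ᵐ z ∂ν, |w z| ≤ C^(2^k) := by
      filter_upwards [hw1, hbd] with z e1 e2
      rw [e1, abs_pow]
      exact pow_le_pow_left₀ (abs_nonneg _) e2 _
    have h2 : ‖w‖ ≤ C^(2^k) := aux_norm_le (pow_nonneg hC _) hwb
    rw [h1]
    calc ‖w‖^2 ≤ (C^(2^k))^2 := by
          exact pow_le_pow_left₀ (norm_nonneg _) h2 2
      _ = C^(2^(k+1)) := by
          have h3 : (2:ℕ)^(k+1) = 2^k * 2 := pow_succ 2 k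
          rw [h3, pow_mul]
  -- Tl commutes with absolute value on the span
  have habs_span : ∀ u ∈ Submodule.span ℝ S, Tl |u| = |Tl u| := by
    intro u hu
    obtain ⟨C, hC0, hC⟩ := bddAE_nonneg (hgood u hu).1
    have hTu : ∀ᵐ z ∂ν, |Tl u z| ≤ C := hTbdd u hu C hC0 hC
    have key : ∀ n : ℕ, ‖Tl |u| - |Tl u|‖ ≤ 2/(n+1) := by
      intro n
      have hεpos : (0:ℝ) < 1/(n+1) := by positivity
      obtain ⟨p, hp⟩ := exists_poly_abs (C := C) hεpos
      obtain ⟨w, hwspan, hw1, hw2⟩ := hpoly u hu p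
      have d1 : ‖(|u| : Lp ℝ 2 ν) - w‖ ≤ 1/(n+1) := by
        refine aux_norm_le hεpos.le ?_
        filter_upwards [Lp.coeFn_sub (|u| : Lp ℝ 2 ν) w, Lp.coeFn_abs u, hw1, hC]
          with z e1 e2 e3 e4
        rw [e1, Pi.sub_apply, e2, e3, abs_sub_comm]
        exact hp (u z) e4
      have d2 : ‖Tl w - (|Tl u| : Lp ℝ 2 ν)‖ ≤ 1/(n+1) := by
        refine aux_norm_le hεpos.le ?_
        filter_upwards [Lp.coeFn_sub (Tl w) (|Tl u| : Lp ℝ 2 ν), Lp.coeFn_abs (Tl u), hw2, hTu]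
          with z e1 e2 e3 e4
        rw [e1, Pi.sub_apply, e2, e3]
        exact hp (Tl u z) e4
      calc ‖Tl |u| - |Tl u|‖ = ‖(Tl |u| - Tl w) + (Tl w - |Tl u|)‖ := by
            rw [sub_add_sub_cancel]
        _ ≤ ‖Tl |u| - Tl w‖ + ‖Tl w - |Tl u|‖ := norm_add_le _ _
        _ = ‖Tl (|u| - w)‖ + ‖Tl w - |Tl u|‖ := by rw [map_sub]
        _ = ‖(|u| : Lp ℝ 2 ν) - w‖ + ‖Tl w - |Tl u|‖ := by rw [Tl.norm_map]
        _ ≤ 1/(n+1) + 1/(n+1) := add_le_add d1 d2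
        _ = 2/(n+1) := by ring
    have hzero : ‖Tl |u| - |Tl u|‖ ≤ 0 := by
      refine le_of_forall_pos_le_add ?_
      intro ε hε
      obtain ⟨n, hn⟩ := exists_nat_one_div_lt (half_pos hε)
      calc ‖Tl |u| - |Tl u|‖ ≤ 2/(n+1) := key n
        _ = 2 * (1/(n+1)) := by ring
        _ ≤ 2 * (ε/2) := by linarith
        _ = 0 + ε := by ring
    have h0 : ‖Tl |u| - |Tl u|‖ = 0 := le_antisymm hzero (norm_nonneg _)
    rw [← sub_eq_zero]
    exact norm_eq_zero.mp h0
  -- Tl commutes with absolute value everywhere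
  have habs_cont : Continuous (fun u : Lp ℝ 2 ν => |u|) := by
    refine (LipschitzWith.of_dist_le_mul (K := 1) ?_).continuous
    intro a b
    rw [dist_eq_norm, dist_eq_norm, NNReal.coe_one, one_mul]
    exact norm_abs_sub_abs a b
  have habs : ∀ u : Lp ℝ 2 ν, Tl |u| = |Tl u| := by
    intro u
    have hcl : IsClosed {u : Lp ℝ 2 ν | Tl |u| = |Tl u|} :=
      isClosed_eq (Tl.continuous.comp habs_cont) (habs_cont.comp Tl.continuous)
    have hsub : (Submodule.span ℝ S : Set (Lp ℝ 2 ν)) ⊆ {u | Tl |u| = |Tl u|} :=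
      fun u hu => habs_span u hu
    have h2 := hcl.closure_subset_iff.mpr hsub
    rw [hC.closure_eq] at h2
    exact h2 (Set.mem_univ u)
  -- positivity
  have hpos : ∀ f : Lp ℝ 2 ν, 0 ≤ f → 0 ≤ Tl f := by
    intro f hf
    have h1 : |f| = f := abs_of_nonneg hf
    have h2 : Tl f = |Tl f| := by
      conv_lhs => rw [← h1]
      exact habs f
    rw [h2, ← MeasureTheory.Lp.coeFn_nonneg]
    filter_upwards [Lp.coeFn_abs (Tl f)] with z e
    rw [Pi.zero_apply, e]
    exact abs_nonneg _
  -- intertwining relations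
  have hint1 : ∀ f : Lp ℝ 2 μ, Tl (I.J f) = I.J (L.J f) := by
    have hbdd : ∀ f : Lp ℝ 2 μ, BddAE f → Tl (I.J f) = I.J (L.J f) := by
      intro f hf
      have e2 : (I'.J (lpOne μ' 2) : Z → ℝ) =ᵐ[ν] fun _ => (1:ℝ) := by
        rw [I'.unital]; exact lpOne_coeFn
      refine hsval _ _ ⟨f, lpOne μ' 2, hf, bddAE_lpOne, ?_, ?_⟩
      · filter_upwards [e2] with z e
        rw [e, mul_one]
      · rw [R.unital]
        filter_upwards [e2] with z e
        rw [e, mul_one]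
    intro f
    have hcl : IsClosed {f : Lp ℝ 2 μ | Tl (I.J f) = I.J (L.J f)} :=
      isClosed_eq (Tl.continuous.comp I.J.continuous) (I.J.continuous.comp L.J.continuous)
    have hsub : (Lp.simpleFunc ℝ 2 μ : Set (Lp ℝ 2 μ)) ⊆ {f | Tl (I.J f) = I.J (L.J f)} :=
      fun f hfs => hbdd f (bddAE_simpleFunc ⟨f, hfs⟩)
    have h2 := hcl.closure_subset_iff.mpr hsub
    rw [(Lp.simpleFunc.dense (by norm_num : (2:ℝ≥0∞) ≠ ⊤)).closure_eq] at h2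
    exact h2 (Set.mem_univ f)
  have hint2 : ∀ g : Lp ℝ 2 μ', Tl (I'.J g) = I'.J (R.J g) := by
    have hbdd : ∀ g : Lp ℝ 2 μ', BddAE g → Tl (I'.J g) = I'.J (R.J g) := by
      intro g hg
      have e1 : (I.J (lpOne μ 2) : Z → ℝ) =ᵐ[ν] fun _ => (1:ℝ) := by
        rw [I.unital]; exact lpOne_coeFn
      refine hsval _ _ ⟨lpOne μ 2, g, bddAE_lpOne, hg, ?_, ?_⟩
      · filter_upwards [e1] with z e
        rw [e, one_mul]
      · rw [L.unital]
        filter_upwards [e1] with z e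
        rw [e, one_mul]
    intro g
    have hcl : IsClosed {g : Lp ℝ 2 μ' | Tl (I'.J g) = I'.J (R.J g)} :=
      isClosed_eq (Tl.continuous.comp I'.J.continuous) (I'.J.continuous.comp R.J.continuous)
    have hsub : (Lp.simpleFunc ℝ 2 μ' : Set (Lp ℝ 2 μ')) ⊆ {g | Tl (I'.J g) = I'.J (R.J g)} :=
      fun g hgs => hbdd g (bddAE_simpleFunc ⟨g, hgs⟩)
    have h2 := hcl.closure_subset_iff.mpr hsub
    rw [(Lp.simpleFunc.dense (by norm_num : (2:ℝ≥0∞) ≠ ⊤)).closure_eq] at h2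
    exact h2 (Set.mem_univ g)
  refine ⟨⟨Tl, hpos, hone, ?_, habs⟩, hint1, hint2⟩
  intro f
  calc ∫ z, Tl f z ∂ν = ⟪Tl f, lpOne ν 2⟫ := (aux_inner_one _).symm
    _ = ⟪Tl f, Tl (lpOne ν 2)⟫ := by rw [hone]
    _ = ⟪f, lpOne ν 2⟫ := LinearIsometry.inner_map_map Tl f _
    _ = ∫ z, f z ∂ν := aux_inner_one _

end ExistenceConstruction



/-- Given a coupling `(Z, I, I')` with coupling operator `P = I'* ∘ I`
and Markov embeddings `L, R`, there is a Markov embedding `T` on `L²(Z;ℝ)` with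
`T ∘ I = I ∘ L` and `T ∘ I' = I' ∘ R` if and only if `R* ∘ P ∘ L = P`; in this case `T`
is unique and satisfies `T((If)·(I'g)) = (I(Lf))·(I'(Rg))` for bounded `f, g`. -/
theorem exists_joining_iff (hPμ : IsProbabilityMeasure μ) (hPμ' : IsProbabilityMeasure μ')
    (hPν : IsProbabilityMeasure ν)
    (I : MarkovEmbedding μ ν) (I' : MarkovEmbedding μ' ν) (hC : IsCoupling I I')
    (L : MarkovEmbedding μ μ) (R : MarkovEmbedding μ' μ') :
    ((∃ T : MarkovEmbedding ν ν, Intertwines I I' L R T) ↔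
      (ContinuousLinearMap.adjoint R.J.toContinuousLinearMap).comp
          (((ContinuousLinearMap.adjoint I'.J.toContinuousLinearMap).comp
              I.J.toContinuousLinearMap).comp L.J.toContinuousLinearMap) =
        (ContinuousLinearMap.adjoint I'.J.toContinuousLinearMap).comp
          I.J.toContinuousLinearMap) ∧
    (∀ T T' : MarkovEmbedding ν ν,
      Intertwines I I' L R T → Intertwines I I' L R T' → T = T') ∧
    (∀ T : MarkovEmbedding ν ν, Intertwines I I' L R T →
      ∀ (f : Lp ℝ 2 μ) (g : Lp ℝ 2 μ'), BddAE f → BddAE g →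
        ∀ u v : Lp ℝ 2 ν,
          ((u : Z → ℝ) =ᵐ[ν] fun z => I.J f z * I'.J g z) →
          ((v : Z → ℝ) =ᵐ[ν] fun z => I.J (L.J f) z * I'.J (R.J g) z) →
          T.J u = v) := by
  haveI := hPμ; haveI := hPμ'; haveI := hPν
  refine ⟨⟨?_, ?_⟩, ?_, ?_⟩
  · rintro ⟨T, hT⟩
    exact forward_dir I I' L R T hT
  · intro hP
    exact exists_T I I' hC L R hP
  · intro T T' hT hT'
    exact unique_T I I' hC L R T T' hT hT'
  · intro T hT f g hf hg u v hu hv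
    exact prod_formula I I' L R T hT hf hg hu hv

end
end

section
/- For a compact Hausdorff space Ω the following assertions are equivalent: (i) C(Ω;ℝ) is Dedekind complete, i.e., every nonempty subset of C(Ω;ℝ) that has an upper bound in C(Ω;ℝ) has a least upper bound in C(Ω;ℝ); (ii) Ω is extremally disconnected. -/
open Set

/-- For a compact Hausdorff space `Ω`, the lattice `C(Ω;ℝ)` (with the
pointwise order) is Dedekind complete if and only if `Ω` is extremally disconnected. -/
theorem dedekindComplete_iff_extremallyDisconnected
    {Ω : Type*} [TopologicalSpace Ω] [CompactSpace Ω] [T2Space Ω] :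
    (∀ S : Set C(Ω, ℝ), S.Nonempty → BddAbove S → ∃ b, IsLUB S b) ↔
      ExtremallyDisconnected Ω := by
  constructor
  · -- Dedekind complete → extremally disconnected
    intro H
    constructor
    intro U hU
    set S : Set C(Ω, ℝ) := {f | (∀ x, 0 ≤ f x ∧ f x ≤ 1) ∧ ∀ x ∉ U, f x = 0} with hSdef
    have h0 : (0 : C(Ω, ℝ)) ∈ S := ⟨fun x => by simp, fun x _ => rfl⟩
    have h1ub : (1 : C(Ω, ℝ)) ∈ upperBounds S := by
      intro f hf
      rw [ContinuousMap.le_def]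
      intro x
      exact (hf.1 x).2
    obtain ⟨b, hb⟩ := H S ⟨0, h0⟩ ⟨1, h1ub⟩
    have hb_le_one : ∀ x, b x ≤ 1 := by
      have := hb.2 h1ub
      rw [ContinuousMap.le_def] at this
      exact this
    have hb_nonneg : ∀ x, 0 ≤ b x := by
      have := hb.1 h0
      rw [ContinuousMap.le_def] at this
      simpa using this
    -- b = 1 on U
    have hbU : ∀ x ∈ U, b x = 1 := by
      intro x hx
      obtain ⟨f, hf0, hf1, hf01⟩ := exists_continuous_zero_one_of_isClosed
        (isClosed_compl_iff.2 hU) (isClosed_singleton (x := x))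
        (disjoint_singleton_right.2 (by simp [hx]))
      have hfS : f ∈ S := ⟨fun y => ⟨(hf01 y).1, (hf01 y).2⟩, fun y hy => hf0 hy⟩
      have := hb.1 hfS
      rw [ContinuousMap.le_def] at this
      have h1 : (1 : ℝ) ≤ b x := by
        have := this x
        rwa [hf1 (mem_singleton x)] at this
      exact le_antisymm (hb_le_one x) h1
    -- b = 1 on closure U
    have hbclU : ∀ x ∈ closure U, b x = 1 := by
      have hcl : closure U ⊆ {x | b x = 1} :=
        closure_minimal hbU (isClosed_eq b.continuous continuous_const)
      exact fun x hx => hcl hx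
    -- b = 0 off closure U
    have hboff : ∀ x ∉ closure U, b x = 0 := by
      intro x hx
      obtain ⟨g, hg0, hg1, hg01⟩ := exists_continuous_zero_one_of_isClosed
        (isClosed_singleton (x := x)) isClosed_closure
        (disjoint_singleton_left.2 hx)
      have hgub : g ∈ upperBounds S := by
        intro f hf
        rw [ContinuousMap.le_def]
        intro y
        by_cases hy : y ∈ U
        · have : g y = 1 := hg1 (subset_closure hy)
          rw [this]; exact (hf.1 y).2
        · rw [hf.2 y hy]; exact (hg01 y).1
      have := hb.2 hgub
      rw [ContinuousMap.le_def] at this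
      have hle := this x
      rw [hg0 (mem_singleton x)] at hle
      exact le_antisymm hle (hb_nonneg x)
    have : closure U = b ⁻¹' Ioi (1 / 2 : ℝ) := by
      ext x
      constructor
      · intro hx
        simp only [mem_preimage, mem_Ioi, hbclU x hx]
        norm_num
      · intro hx
        by_contra hxc
        have := hboff x hxc
        simp only [mem_preimage, mem_Ioi, this] at hx
        norm_num at hx
    rw [this]
    exact isOpen_Ioi.preimage b.continuous
  · -- extremally disconnected → Dedekind complete
    intro hED S hS hBdd
    obtain ⟨g₀, hg₀⟩ := hS
    obtain ⟨u, hu⟩ := hBdd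
    have hu' : ∀ f ∈ S, ∀ x, f x ≤ u x := by
      intro f hf x
      have := hu hf
      rw [ContinuousMap.le_def] at this
      exact this x
    set P : Ω → Set ℝ := fun x => (fun f : C(Ω, ℝ) => f x) '' S with hP
    have hPne : ∀ x, (P x).Nonempty := fun x => ⟨g₀ x, ⟨g₀, hg₀, rfl⟩⟩
    have hPbdd : ∀ x, BddAbove (P x) := by
      intro x
      refine ⟨u x, ?_⟩
      rintro _ ⟨f, hf, rfl⟩
      exact hu' f hf x
    set φ : Ω → ℝ := fun x => sSup (P x) with hφ
    have hφ_le_u : ∀ x, φ x ≤ u x := by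
      intro x
      refine csSup_le (hPne x) ?_
      rintro _ ⟨f, hf, rfl⟩
      exact hu' f hf x
    have hle_φ : ∀ f ∈ S, ∀ x, f x ≤ φ x := fun f hf x => le_csSup (hPbdd x) ⟨f, hf, rfl⟩
    -- global bounds
    obtain ⟨M, hM⟩ := (isCompact_range u.continuous).bddAbove
    have hMu : ∀ y, u y ≤ M := fun y => hM (mem_range_self y)
    obtain ⟨m, hm⟩ := (isCompact_range g₀.continuous).bddBelow
    have hmg : ∀ y, m ≤ g₀ y := fun y => hm (mem_range_self y)
    -- the open sets T a and their (open) closures C a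
    set T : ℝ → Set Ω := fun a => {x | a < φ x} with hT
    have hT_open : ∀ a, IsOpen (T a) := by
      intro a
      have : T a = ⋃ f ∈ S, {x | a < f x} := by
        ext x
        simp only [hT, mem_setOf_eq, mem_iUnion]
        constructor
        · intro hx
          obtain ⟨_, ⟨f, hf, rfl⟩, hlt⟩ := exists_lt_of_lt_csSup (hPne x) hx
          exact ⟨f, hf, hlt⟩
        · rintro ⟨f, hf, hlt⟩
          exact lt_csSup_of_lt (hPbdd x) ⟨f, hf, rfl⟩ hlt
      rw [this]
      exact isOpen_biUnion fun f _ => isOpen_lt continuous_const f.continuous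
    set C : ℝ → Set Ω := fun a => closure (T a) with hC
    have hC_open : ∀ a, IsOpen (C a) := fun a => hED.open_closure _ (hT_open a)
    have hC_mono : ∀ {a a' : ℝ}, a ≤ a' → C a' ⊆ C a := by
      intro a a' haa
      exact closure_mono fun x hx => lt_of_le_of_lt haa hx
    set A : Ω → Set ℝ := fun x => {a | x ∉ C a} with hA
    have hAne : ∀ x, (A x).Nonempty := by
      intro x
      refine ⟨M, ?_⟩
      have : T M = ∅ := by
        ext y
        simp only [hT, mem_setOf_eq, mem_empty_iff_false, iff_false, not_lt]
        exact (hφ_le_u y).trans (hMu y)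
      simp [hA, hC, this]
    have hφ_le_A : ∀ x, ∀ a ∈ A x, φ x ≤ a := by
      intro x a ha
      by_contra hlt
      push_neg at hlt
      exact ha (subset_closure hlt)
    have hAbdd : ∀ x, BddBelow (A x) := by
      intro x
      exact ⟨m, fun a ha => (hmg x).trans ((hle_φ g₀ hg₀ x).trans (hφ_le_A x a ha))⟩
    set b : Ω → ℝ := fun x => sInf (A x) with hb
    have hφb : ∀ x, φ x ≤ b x := fun x => le_csInf (hAne x) (hφ_le_A x)
    -- b is below every continuous upper bound
    have hb_le : ∀ c : C(Ω, ℝ), c ∈ upperBounds S → ∀ x, b x ≤ c x := by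
      intro c hc x
      refine le_of_forall_gt_imp_ge_of_dense ?_
      intro a ha
      refine csInf_le (hAbdd x) ?_
      have hsub : C a ⊆ {y | a ≤ c y} := by
        refine closure_minimal ?_ (isClosed_le continuous_const c.continuous)
        intro y hy
        have hφc : φ y ≤ c y := by
          refine csSup_le (hPne y) ?_
          rintro _ ⟨f, hf, rfl⟩
          have := hc hf
          rw [ContinuousMap.le_def] at this
          exact this y
        exact le_of_lt (lt_of_lt_of_le hy hφc)
      intro hx
      exact absurd ha (not_lt.2 (hsub hx))
    -- semicontinuity
    have hlsc : LowerSemicontinuous b := by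
      rw [lowerSemicontinuous_iff_isOpen_preimage]
      intro r
      have : b ⁻¹' Ioi r = ⋃ a : {a : ℝ // r < a}, C a.1 := by
        ext x
        simp only [mem_preimage, mem_Ioi, mem_iUnion]
        constructor
        · intro hx
          obtain ⟨a, har, hab⟩ := exists_between hx
          refine ⟨⟨a, har⟩, ?_⟩
          by_contra hxc
          have : b x ≤ a := csInf_le (hAbdd x) hxc
          exact absurd hab (not_lt.2 this)
        · rintro ⟨⟨a, har⟩, hx⟩
          have hab : a ≤ b x := by
            refine le_csInf (hAne x) ?_
            intro a' ha'
            by_contra hlt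
            push_neg at hlt
            exact ha' (hC_mono (le_of_lt hlt) hx)
          exact lt_of_lt_of_le har hab
      rw [this]
      exact isOpen_iUnion fun a => hC_open a.1
    have husc : UpperSemicontinuous b := by
      rw [upperSemicontinuous_iff_isOpen_preimage]
      intro r
      have : b ⁻¹' Iio r = ⋃ a : {a : ℝ // a < r}, (C a.1)ᶜ := by
        ext x
        simp only [mem_preimage, mem_Iio, mem_iUnion, mem_compl_iff]
        constructor
        · intro hx
          obtain ⟨a, ha, har⟩ := exists_lt_of_csInf_lt (hAne x) hx
          exact ⟨⟨a, har⟩, ha⟩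
        · rintro ⟨⟨a, har⟩, hx⟩
          exact lt_of_le_of_lt (csInf_le (hAbdd x) hx) har
      rw [this]
      exact isOpen_iUnion fun a => (isClosed_closure (s := T a.1)).isOpen_compl
    have hbc : Continuous b := continuous_iff_lower_upperSemicontinuous.mpr ⟨hlsc, husc⟩
    refine ⟨⟨b, hbc⟩, ?_, ?_⟩
    · intro f hf
      rw [ContinuousMap.le_def]
      intro x
      exact (hle_φ f hf x).trans (hφb x)
    · intro c hc
      rw [ContinuousMap.le_def]
      intro x
      exact hb_le c hc x
end

section
/- (Wright's Lemma) Let Ω be a compact Hausdorff extremally disconnected space, let (f_i)_{i∈I} be a nonempty family in C(Ω;ℝ) that is bounded from below by some element of C(Ω;ℝ), and let f ∈ C(Ω;ℝ) be the greatest lower bound of {f_i : i ∈ I} in C(Ω;ℝ). Then the set {ω ∈ Ω : f(ω) = inf_{i∈I} f_i(ω)} is residual in Ω; in particular f(ω) = inf_{i∈I} f_i(ω) for all ω in a dense subset of Ω. -/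
/-- **Wright's Lemma.** If `Ω` is compact Hausdorff and extremally
disconnected, `(f i)` a nonempty family in `C(Ω;ℝ)` bounded below, and `F` its greatest
lower bound in `C(Ω;ℝ)`, then `F ω = ⨅ i, f i ω` on a residual (hence dense) subset. -/
theorem wright_lemma {Ω : Type*} [TopologicalSpace Ω] [CompactSpace Ω] [T2Space Ω]
    [ExtremallyDisconnected Ω] {I : Type*} [Nonempty I] (f : I → C(Ω, ℝ)) (g : C(Ω, ℝ))
    (hbd : ∀ i, g ≤ f i) (F : C(Ω, ℝ)) (hglb : IsGLB (Set.range f) F) :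
    {ω : Ω | F ω = ⨅ i, f i ω} ∈ residual Ω ∧ Dense {ω : Ω | F ω = ⨅ i, f i ω} := by
  classical
  have hbdd : ∀ ω : Ω, BddBelow (Set.range fun i => f i ω) := fun ω =>
    ⟨g ω, by rintro _ ⟨i, rfl⟩; exact hbd i ω⟩
  have hFle : ∀ i (ω : Ω), F ω ≤ f i ω := fun i ω => hglb.1 ⟨i, rfl⟩ ω
  have hFinf : ∀ ω : Ω, F ω ≤ ⨅ i, f i ω := fun ω =>
    le_ciInf fun i => hFle i ω
  set S : ℕ → Set Ω := fun n => ⋂ i, {ω | F ω + (1 / (n + 1) : ℝ) ≤ f i ω} with hS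
  have hSclosed : ∀ n, IsClosed (S n) := fun n =>
    isClosed_iInter fun i =>
      isClosed_le (F.continuous.add continuous_const) (f i).continuous
  have hSnd : ∀ n, interior (S n) = ∅ := by
    intro n
    by_contra hne
    set V := interior (S n) with hV
    obtain ⟨ω₀, hω₀⟩ := Set.nonempty_iff_ne_empty.2 hne
    have hVopen : IsOpen V := isOpen_interior
    have hclopen : IsClopen (closure V) :=
      ⟨isClosed_closure, ExtremallyDisconnected.open_closure V hVopen⟩
    set ε : ℝ := 1 / (n + 1) with hε
    have hεpos : (0 : ℝ) < ε := by positivity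
    have hcont : Continuous fun ω : Ω => F ω + if ω ∈ closure V then ε else 0 := by
      refine F.continuous.add ?_
      refine continuous_if (fun a ha => ?_) continuousOn_const continuousOn_const
      rw [show {a : Ω | a ∈ closure V} = closure V from rfl, hclopen.frontier_eq] at ha
      exact absurd ha (Set.notMem_empty a)
    set G : C(Ω, ℝ) := ⟨fun ω => F ω + if ω ∈ closure V then ε else 0, hcont⟩ with hG
    have hGlb : G ∈ lowerBounds (Set.range f) := by
      rintro _ ⟨i, rfl⟩
      intro ω
      show F ω + (if ω ∈ closure V then ε else 0) ≤ f i ω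
      by_cases hω : ω ∈ closure V
      · simp only [hω, if_true]
        have hsub : closure V ⊆ {ω | F ω + ε ≤ f i ω} := by
          apply closure_minimal
          · intro x hx
            have := interior_subset hx
            exact Set.mem_iInter.1 this i
          · exact isClosed_le (F.continuous.add continuous_const) (f i).continuous
        exact hsub hω
      · simp only [hω, if_false, add_zero]
        exact hFle i ω
    have hGF : G ≤ F := hglb.2 hGlb
    have := hGF ω₀
    have hω₀' : ω₀ ∈ closure V := subset_closure hω₀
    simp only [hG, ContinuousMap.coe_mk, ContinuousMap.toFun_eq_coe, hω₀', if_true] at this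
    linarith
  have hsub : {ω : Ω | F ω = ⨅ i, f i ω}ᶜ ⊆ ⋃ n, S n := by
    intro ω hω
    have hlt : F ω < ⨅ i, f i ω := lt_of_le_of_ne (hFinf ω) hω
    obtain ⟨n, hn⟩ := exists_nat_one_div_lt (sub_pos.2 hlt)
    refine Set.mem_iUnion.2 ⟨n, Set.mem_iInter.2 fun i => ?_⟩
    have h1 : (1 / (n + 1) : ℝ) ≤ (⨅ i, f i ω) - F ω := le_of_lt hn
    have h2 : (⨅ i, f i ω) ≤ f i ω := ciInf_le (hbdd ω) i
    simp only [Set.mem_setOf_eq]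
    linarith
  have hmeagre : IsMeagre {ω : Ω | F ω = ⨅ i, f i ω}ᶜ := by
    refine IsMeagre.mono hsub (isMeagre_iUnion fun n => ?_)
    have : IsOpen (S n)ᶜ ∧ Dense (S n)ᶜ :=
      isClosed_isNowhereDense_iff_compl.1
        ⟨hSclosed n, ((hSclosed n).isNowhereDense_iff).2 (hSnd n)⟩
    exact residual_of_dense_open this.1 this.2
  have hres : {ω : Ω | F ω = ⨅ i, f i ω} ∈ residual Ω := by
    have := hmeagre
    rwa [IsMeagre, compl_compl] at this
  exact ⟨hres, dense_of_mem_residual hres⟩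
end

section
/- Let Ω be a compact Hausdorff extremally disconnected space, let (e_α)_{α∈A} be a net in C(Ω;ℝ) and e ∈ C(Ω;ℝ). Suppose (e_α) order-converges to e, i.e., there is a net (f_i)_{i∈I} in C(Ω;ℝ) decreasing to 0 such that for every i ∈ I there is α_i ∈ A with |e_α − e| ≤ f_i for all α ≥ α_i. Then (e_α) is eventually bounded in the supremum norm, and there is a residual set D ⊆ Ω such that lim_α e_α(ω) = e(ω) for every ω ∈ D. -/
open Filter

/-- A net in `C(Ω;ℝ)` decreases to `0`: it is antitone, nonnegative, and `0` is the
greatest lower bound of its range. -/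
def DecreasesToZero {Ω : Type*} [TopologicalSpace Ω] {I : Type*} [Preorder I]
    (f : I → C(Ω, ℝ)) : Prop :=
  (∀ i j : I, i ≤ j → 0 ≤ f j ∧ f j ≤ f i) ∧ IsGLB (Set.range f) 0

/-- The net `e` order-converges to `e₀` in `C(Ω;ℝ)`: some net decreasing to `0`
eventually dominates `|e α − e₀|`. -/
def OrderTendsto {Ω A : Type*} [TopologicalSpace Ω] [Preorder A]
    (e : A → C(Ω, ℝ)) (e₀ : C(Ω, ℝ)) : Prop :=
  ∃ (I : Type) (pre : Preorder I),
    IsDirected I (fun i j => pre.le i j) ∧ Nonempty I ∧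
    ∃ f : I → C(Ω, ℝ), @DecreasesToZero Ω _ I pre f ∧
      ∀ i : I, ∃ a : A, ∀ b : A, a ≤ b → |e b - e₀| ≤ f i

/-- On a compact Hausdorff extremally disconnected space, an
order-convergent net in `C(Ω;ℝ)` is eventually norm-bounded and converges pointwise to
its order-limit on a residual set. -/
theorem orderTendsto_imp_residual_pointwise {Ω : Type*} [TopologicalSpace Ω]
    [CompactSpace Ω] [T2Space Ω] [ExtremallyDisconnected Ω]
    {A : Type*} [Preorder A] [IsDirected A (· ≤ ·)] [Nonempty A]
    (e : A → C(Ω, ℝ)) (e₀ : C(Ω, ℝ)) (h : OrderTendsto e e₀) :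
    (∃ (C : ℝ) (a₀ : A), ∀ a : A, a₀ ≤ a → ‖e a‖ ≤ C) ∧
      ∃ D ∈ residual Ω, ∀ ω ∈ D,
        Tendsto (fun a => e a ω) atTop (nhds (e₀ ω)) := by
  classical
  obtain ⟨I, pre, hdir, hne, f, hf, hdom⟩ := h
  letI := pre
  have hf0 : ∀ i, (0 : C(Ω, ℝ)) ≤ f i := fun i => (hf.1 i i le_rfl).1
  constructor
  · -- eventual norm boundedness
    obtain ⟨i₀⟩ := hne
    obtain ⟨a₀, ha₀⟩ := hdom i₀
    refine ⟨‖e₀‖ + ‖f i₀‖, a₀, fun a ha => ?_⟩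
    have h1 : ‖e a - e₀‖ ≤ ‖f i₀‖ := by
      refine (ContinuousMap.norm_le _ (norm_nonneg _)).2 fun x => ?_
      have h2 : (|e a - e₀| : C(Ω, ℝ)) x ≤ f i₀ x := (ha₀ a ha) x
      have h3 : (|e a - e₀| : C(Ω, ℝ)) x = |(e a - e₀) x| := rfl
      calc ‖(e a - e₀) x‖ = |(e a - e₀) x| := Real.norm_eq_abs _
        _ ≤ f i₀ x := h3 ▸ h2
        _ ≤ |f i₀ x| := le_abs_self _
        _ = ‖f i₀ x‖ := (Real.norm_eq_abs _).symm
        _ ≤ ‖f i₀‖ := ContinuousMap.norm_coe_le_norm _ x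
    calc ‖e a‖ = ‖(e a - e₀) + e₀‖ := by ring_nf
      _ ≤ ‖e a - e₀‖ + ‖e₀‖ := norm_add_le _ _
      _ ≤ ‖f i₀‖ + ‖e₀‖ := by linarith
      _ = ‖e₀‖ + ‖f i₀‖ := by ring
  · -- residual pointwise convergence
    set U : ℕ → Set Ω := fun n => {ω | ∃ i, f i ω < 1 / (n + 1)} with hU
    have hUopen : ∀ n, IsOpen (U n) := by
      intro n
      have : U n = ⋃ i, (f i) ⁻¹' Set.Iio (1 / (n + 1)) := by
        ext ω; simp [hU, Set.mem_iUnion]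
      rw [this]
      exact isOpen_iUnion fun i => (f i).continuous.isOpen_preimage _ isOpen_Iio
    have hUdense : ∀ n, Dense (U n) := by
      intro n
      by_contra hd
      rw [dense_iff_inter_open] at hd
      push_neg at hd
      obtain ⟨V, hVopen, hVne, hVdisj⟩ := hd
      set c : ℝ := 1 / (n + 1) with hc
      have hcpos : 0 < c := by positivity
      have hV : ∀ ω ∈ V, ∀ i, c ≤ f i ω := by
        intro ω hω i
        by_contra hlt
        push_neg at hlt
        have hmem : ω ∈ V ∩ U n := ⟨hω, ⟨i, hlt⟩⟩
        rw [hVdisj] at hmem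
        exact hmem
      have hWclopen : IsClopen (closure V) :=
        ⟨isClosed_closure, ExtremallyDisconnected.open_closure V hVopen⟩
      have hW : ∀ ω ∈ closure V, ∀ i, c ≤ f i ω := by
        intro ω hω i
        have hcl : closure V ⊆ {ω | c ≤ f i ω} :=
          closure_minimal (fun x hx => hV x hx i)
            (isClosed_le continuous_const (f i).continuous)
        exact hcl hω
      have hcont : Continuous (fun ω => if ω ∈ closure V then c else (0 : ℝ)) := by
        apply continuous_if ?_ continuousOn_const continuousOn_const
        intro a ha
        rw [show {x | x ∈ closure V} = closure V from rfl, hWclopen.frontier_eq] at ha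
        exact absurd ha (Set.notMem_empty a)
      set g : C(Ω, ℝ) := ⟨fun ω => if ω ∈ closure V then c else 0, hcont⟩ with hg
      have hglb : g ∈ lowerBounds (Set.range f) := by
        rintro _ ⟨i, rfl⟩
        intro ω
        by_cases hω : ω ∈ closure V
        · simp only [hg, ContinuousMap.coe_mk, hω, if_pos]
          exact hW ω hω i
        · simp only [hg, ContinuousMap.coe_mk, hω, if_neg, not_false_iff]
          exact hf0 i ω
      have hle : g ≤ 0 := hf.2.2 hglb
      obtain ⟨ω₀, hω₀⟩ := hVne
      have h1 : g ω₀ = c := by simp [hg, subset_closure hω₀]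
      have h2 : g ω₀ ≤ (0 : C(Ω, ℝ)) ω₀ := hle ω₀
      rw [h1, ContinuousMap.zero_apply] at h2
      linarith
    refine ⟨⋂ n, U n, ?_, ?_⟩
    · exact countable_iInter_mem.2 fun n =>
        residual_of_dense_open (hUopen n) (hUdense n)
    · intro ω hω
      rw [Metric.tendsto_nhds]
      intro ε hε
      obtain ⟨n, hn⟩ := exists_nat_one_div_lt hε
      obtain ⟨i, hi⟩ := Set.mem_iInter.1 hω n
      obtain ⟨a, ha⟩ := hdom i
      rw [eventually_atTop]
      refine ⟨a, fun b hb => ?_⟩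
      have h2 : |(e b - e₀) ω| ≤ f i ω := (ha b hb) ω
      rw [Real.dist_eq]
      calc |e b ω - e₀ ω| = |(e b - e₀) ω| := by simp
        _ ≤ f i ω := h2
        _ < 1 / (n + 1) := hi
        _ < ε := hn
end

section
/- Let A be a commutative unital C*-algebra, let E and F be Hilbert modules over A, and let T : E → F be a bounded A-linear map with operator norm ‖T‖. Then ⟪Tx, Tx⟫ ≤ ‖T‖² ⟪x, x⟫ in the order of A for every x ∈ E; equivalently, √⟪Tx,Tx⟫ ≤ ‖T‖ · √⟪x,x⟫ for every x ∈ E. -/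
noncomputable section

/-- A Hilbert module structure over a commutative unital C*-algebra `A` on the unital
`A`-module `E`: an `A`-valued inner product, `A`-linear in the first variable, conjugate
symmetric and positive definite, such that `E` is complete for the induced norm
`x ↦ √‖⟪x,x⟫‖`. -/
structure HilbertModuleStruct (A : Type*) [CommCStarAlgebra A] [PartialOrder A]
    [StarOrderedRing A] (E : Type*) [AddCommGroup E] [Module A E] where
  inner : E → E → A
  add_left : ∀ x y z : E, inner (x + y) z = inner x z + inner y z
  smul_left : ∀ (a : A) (x y : E), inner (a • x) y = a * inner x y
  star_inner : ∀ x y : E, star (inner x y) = inner y x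
  inner_self_nonneg : ∀ x : E, 0 ≤ inner x x
  inner_self_eq_zero : ∀ x : E, inner x x = 0 → x = 0
  complete : ∀ u : ℕ → E,
    (∀ ε : ℝ, 0 < ε → ∃ N : ℕ, ∀ m n : ℕ, N ≤ m → N ≤ n →
      ‖inner (u m - u n) (u m - u n)‖ < ε) →
    ∃ x : E, ∀ ε : ℝ, 0 < ε → ∃ N : ℕ, ∀ n : ℕ, N ≤ n → ‖inner (u n - x) (u n - x)‖ < ε

/-- The norm on a Hilbert module induced by the `A`-valued inner product. -/
def HilbertModuleStruct.nrm {A : Type*} [CommCStarAlgebra A] [PartialOrder A]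
    [StarOrderedRing A] {E : Type*} [AddCommGroup E] [Module A E]
    (hE : HilbertModuleStruct A E) (x : E) : ℝ :=
  Real.sqrt ‖hE.inner x x‖

/-- The operator norm of a bounded `A`-linear map between Hilbert modules. -/
def opNorm {A : Type*} [CommCStarAlgebra A] [PartialOrder A] [StarOrderedRing A]
    {E F : Type*} [AddCommGroup E] [Module A E] [AddCommGroup F] [Module A F]
    (hE : HilbertModuleStruct A E) (hF : HilbertModuleStruct A F) (T : E →ₗ[A] F) : ℝ :=
  sInf {C : ℝ | 0 ≤ C ∧ ∀ x : E, hF.nrm (T x) ≤ C * hE.nrm x}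

/-- For a bounded `A`-linear map `T` between Hilbert modules over a
commutative unital C*-algebra, `⟪Tx,Tx⟫ ≤ ‖T‖² ⟪x,x⟫` in the order of `A`. -/
theorem inner_map_le_opNorm_sq_smul_inner {A : Type*} [CommCStarAlgebra A] [PartialOrder A]
    [StarOrderedRing A] {E F : Type*} [AddCommGroup E] [Module A E] [AddCommGroup F]
    [Module A F] (hE : HilbertModuleStruct A E) (hF : HilbertModuleStruct A F)
    (T : E →ₗ[A] F) (hT : ∃ C : ℝ, 0 ≤ C ∧ ∀ x : E, hF.nrm (T x) ≤ C * hE.nrm x) :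
    ∀ x : E, hF.inner (T x) (T x) ≤ (opNorm hE hF T) ^ 2 • hE.inner x x := by
  intro x
  obtain ⟨C₀, hC₀, hC₀le⟩ := hT
  set S : Set ℝ := {C : ℝ | 0 ≤ C ∧ ∀ x : E, hF.nrm (T x) ≤ C * hE.nrm x} with hS
  have hSne : S.Nonempty := ⟨C₀, hC₀, hC₀le⟩
  set N : ℝ := opNorm hE hF T with hNdef
  have hN0 : 0 ≤ N := Real.sInf_nonneg fun C hC => hC.1
  have hNle : ∀ y : E, hF.nrm (T y) ≤ N * hE.nrm y := by
    intro y
    rcases eq_or_lt_of_le (Real.sqrt_nonneg ‖hE.inner y y‖ : (0:ℝ) ≤ hE.nrm y) with h0 | hpos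
    · have h1 : hF.nrm (T y) ≤ C₀ * hE.nrm y := hC₀le y
      have h0' : hE.nrm y = 0 := h0.symm
      rw [h0', mul_zero] at h1 ⊢
      exact h1
    · have hdiv : hF.nrm (T y) / hE.nrm y ≤ N :=
        le_csInf hSne fun C hC => (div_le_iff₀ hpos).mpr (hC.2 y)
      exact (div_le_iff₀ hpos).mp hdiv
  have key : ∀ y : E, ‖hF.inner (T y) (T y)‖ ≤ N ^ 2 * ‖hE.inner y y‖ := by
    intro y
    have h1 := hNle y
    have h2 : hF.nrm (T y) * hF.nrm (T y) ≤ (N * hE.nrm y) * (N * hE.nrm y) :=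
      mul_self_le_mul_self (Real.sqrt_nonneg _) h1
    have e1 : hF.nrm (T y) * hF.nrm (T y) = ‖hF.inner (T y) (T y)‖ :=
      Real.mul_self_sqrt (norm_nonneg _)
    have e2 : hE.nrm y * hE.nrm y = ‖hE.inner y y‖ :=
      Real.mul_self_sqrt (norm_nonneg _)
    nlinarith [Real.sqrt_nonneg ‖hE.inner y y‖]
  set a : A := hE.inner x x with ha
  set b : A := hF.inner (T x) (T x) with hb
  have ha0 : 0 ≤ a := hE.inner_self_nonneg x
  have hb0 : 0 ≤ b := hF.inner_self_nonneg _
  have haSA : IsSelfAdjoint a := .of_nonneg ha0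
  have hbSA : IsSelfAdjoint b := .of_nonneg hb0
  have hspec : ∀ s ∈ spectrum ℝ a, 0 ≤ s := spectrum_nonneg_of_nonneg ha0
  -- inner product of scaled vectors
  have formE : ∀ c : A, IsSelfAdjoint c → hE.inner (c • x) (c • x) = c * c * a := by
    intro c hc
    have h1 : hE.inner x (c • x) = a * c := by
      rw [← hE.star_inner (c • x) x, hE.smul_left, star_mul, hc.star_eq, hE.star_inner]
    rw [hE.smul_left, h1]
    ring
  have formF : ∀ c : A, IsSelfAdjoint c → hF.inner (T (c • x)) (T (c • x)) = c * c * b := by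
    intro c hc
    rw [map_smul]
    have h1 : hF.inner (T x) (c • T x) = b * c := by
      rw [← hF.star_inner (c • T x) (T x), hF.smul_left, star_mul, hc.star_eq, hF.star_inner]
    rw [hF.smul_left, h1]
    ring
  have halg : ∀ r : ℝ, 0 ≤ r → 0 ≤ algebraMap ℝ A r := by
    intro r hr
    have h1 : algebraMap ℝ A r
        = star (algebraMap ℝ A (Real.sqrt r)) * algebraMap ℝ A (Real.sqrt r) := by
      rw [(IsSelfAdjoint.algebraMap A (IsSelfAdjoint.all _)).star_eq, ← map_mul,
        Real.mul_self_sqrt hr]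
    rw [h1]
    exact star_mul_self_nonneg _
  -- main epsilon estimate
  have main : ∀ ε : ℝ, 0 < ε → b ≤ N ^ 2 • a + (N ^ 2 * ε) • (1 : A) := by
    intro ε hε
    set f : ℝ → ℝ := fun s => Real.sqrt (s + ε)⁻¹ with hf
    have hcont : ContinuousOn f (spectrum ℝ a) := by
      apply Real.continuous_sqrt.comp_continuousOn
      apply ContinuousOn.inv₀
      · fun_prop
      · intro s hs
        have := hspec s hs
        positivity
    set c : A := cfc f a with hc
    have hcSA : IsSelfAdjoint c := cfc_predicate f a
    have hccaf : c * c * a = cfc (fun s => f s * f s * s) a := by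
      rw [cfc_mul _ _ a (by fun_prop (disch := exact hcont)) (by fun_prop),
        cfc_mul _ _ a hcont hcont, cfc_id' ℝ a]
    have hnorm_ca : ‖c * c * a‖ ≤ 1 := by
      rw [hccaf]
      apply norm_cfc_le zero_le_one
      intro s hs
      have hs0 := hspec s hs
      have hfs : f s * f s = (s + ε)⁻¹ := Real.mul_self_sqrt (by positivity)
      rw [hfs, Real.norm_eq_abs, abs_of_nonneg (by positivity), inv_mul_eq_div,
        div_le_one (by positivity)]
      linarith
    have hEc := formE c hcSA
    have hFc := formF c hcSA
    have hkey := key (c • x)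
    rw [hEc, hFc] at hkey
    have hccb_norm : ‖c * c * b‖ ≤ N ^ 2 := by
      calc ‖c * c * b‖ ≤ N ^ 2 * ‖c * c * a‖ := hkey
        _ ≤ N ^ 2 * 1 := mul_le_mul_of_nonneg_left hnorm_ca (by positivity)
        _ = N ^ 2 := mul_one _
    have hccb0 : 0 ≤ c * c * b := by rw [← hFc]; exact hF.inner_self_nonneg _
    have hccb_le : c * c * b ≤ algebraMap ℝ A (N ^ 2) :=
      (CStarAlgebra.norm_le_iff_le_algebraMap _ (by positivity) hccb0).mp hccb_norm
    set g : ℝ → ℝ := fun s => Real.sqrt (s + ε) with hg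
    have hgcont : ContinuousOn g (spectrum ℝ a) := by fun_prop
    set d : A := cfc g a with hd
    have hdSA : IsSelfAdjoint d := cfc_predicate g a
    have hconj := star_left_conjugate_le_conjugate hccb_le d
    rw [hdSA.star_eq] at hconj
    have hdd_cc : d * d * (c * c) = 1 := by
      rw [hc, hd, ← cfc_mul g g a hgcont hgcont, ← cfc_mul f f a hcont hcont,
        ← cfc_mul (fun x => g x * g x) (fun x => f x * f x) a (hgcont.mul hgcont) (hcont.mul hcont)]
      have h4 : cfc (fun s => (g s * g s) * (f s * f s)) a = cfc (fun _ : ℝ => (1 : ℝ)) a := by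
        apply cfc_congr
        intro s hs
        have hs0 := hspec s hs
        have h5 : g s * g s = s + ε := Real.mul_self_sqrt (by positivity)
        have h6 : f s * f s = (s + ε)⁻¹ := Real.mul_self_sqrt (by positivity)
        simp only [h5, h6]
        field_simp
      rw [h4, cfc_const (1 : ℝ) a, map_one]
    have hlhs : d * (c * c * b) * d = b := by
      have h7 : d * (c * c * b) * d = (d * d * (c * c)) * b := by ring
      rw [h7, hdd_cc, one_mul]
    have hdd : d * d = a + algebraMap ℝ A ε := by
      rw [hd, ← cfc_mul g g a hgcont hgcont]
      have h8 : cfc (fun s => g s * g s) a = cfc (fun s : ℝ => s + ε) a :=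
        cfc_congr fun s hs => Real.mul_self_sqrt (by have := hspec s hs; positivity)
      rw [h8, cfc_add a _ _ (by fun_prop) (by fun_prop), cfc_id' ℝ a, cfc_const ε a]
    have hrhs : d * algebraMap ℝ A (N ^ 2) * d = N ^ 2 • a + (N ^ 2 * ε) • (1 : A) := by
      have h9 : d * algebraMap ℝ A (N ^ 2) * d = algebraMap ℝ A (N ^ 2) * (d * d) := by ring
      rw [h9, hdd, mul_add, ← map_mul, Algebra.algebraMap_eq_smul_one (N ^ 2 * ε),
        Algebra.algebraMap_eq_smul_one (N ^ 2), smul_mul_assoc, one_mul]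
    rw [hlhs, hrhs] at hconj
    exact hconj
  -- pass to the limit ε → 0
  have hsubSA : IsSelfAdjoint (b - N ^ 2 • a) := hbSA.sub (IsSelfAdjoint.smul (star_trivial ((N:ℝ) ^ 2)) haSA)
  have hδ : ∀ δ : ℝ, 0 < δ → b - N ^ 2 • a ≤ algebraMap ℝ A δ := by
    intro δ hδ
    have hεpos : 0 < δ / (N ^ 2 + 1) := by positivity
    have h1 := main _ hεpos
    have h2 : (N ^ 2 * (δ / (N ^ 2 + 1))) • (1 : A) ≤ algebraMap ℝ A δ := by
      rw [← Algebra.algebraMap_eq_smul_one, ← sub_nonneg, ← map_sub]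
      apply halg
      rw [sub_nonneg, mul_div_assoc', div_le_iff₀ (by positivity)]
      nlinarith
    calc b - N ^ 2 • a ≤ (N ^ 2 * (δ / (N ^ 2 + 1))) • (1 : A) := by
          rw [sub_le_iff_le_add, add_comm]; exact h1
      _ ≤ algebraMap ℝ A δ := h2
  have hspecle : ∀ s ∈ spectrum ℝ (b - N ^ 2 • a), s ≤ 0 := by
    intro s hs
    by_contra hcon
    push_neg at hcon
    have := (le_algebraMap_iff_spectrum_le (a := b - N ^ 2 • a) hsubSA).mp
      (hδ (s / 2) (by linarith)) s hs
    linarith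
  have hfin : b - N ^ 2 • a ≤ algebraMap ℝ A 0 :=
    (le_algebraMap_iff_spectrum_le hsubSA).mpr hspecle
  rw [map_zero, sub_nonpos] at hfin
  exact hfin


end
end

section
/- Let A be a commutative unital C*-algebra, let E and F be Hilbert modules over A, let T : E → F be a bounded A-linear map, and suppose b ∈ A is the least upper bound in A of the set {√⟪Tx,Tx⟫ : x ∈ E, ⟪x,x⟫ ≤ 1}. Then ‖b‖_A = ‖T‖, the operator norm of T. -/
noncomputable section

section AuxLemmas

variable {A : Type*} [CommCStarAlgebra A] [PartialOrder A] [StarOrderedRing A]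

omit [PartialOrder A] [StarOrderedRing A] in
lemma alg_selfAdjoint (r : ℝ) : IsSelfAdjoint (algebraMap ℝ A r) := by
  rw [Algebra.algebraMap_eq_smul_one]
  exact IsSelfAdjoint.smul (star_trivial r) (IsSelfAdjoint.one A)

lemma alg_nonneg {r : ℝ} (hr : 0 ≤ r) : 0 ≤ algebraMap ℝ A r := by
  have h : algebraMap ℝ A r =
      star (algebraMap ℝ A (Real.sqrt r)) * algebraMap ℝ A (Real.sqrt r) := by
    rw [alg_selfAdjoint (A := A) (Real.sqrt r), ← map_mul, Real.mul_self_sqrt hr]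
  rw [h]
  exact star_mul_self_nonneg _

lemma alg_mono {r s : ℝ} (h : r ≤ s) : algebraMap ℝ A r ≤ algebraMap ℝ A s := by
  rw [← sub_nonneg, ← map_sub]
  exact alg_nonneg (by linarith)

lemma norm_cfc_sqrt (a : A) (ha : 0 ≤ a) : ‖CFC.sqrt a‖ = Real.sqrt ‖a‖ := by
  have hsq : CFC.sqrt a * CFC.sqrt a = a := by
    rw [← sq]; exact CFC.sq_sqrt a ha
  have hsa : star (CFC.sqrt a) = CFC.sqrt a := IsSelfAdjoint.of_nonneg (CFC.sqrt_nonneg _)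
  have h := CStarRing.norm_star_mul_self (x := CFC.sqrt a)
  rw [hsa, hsq] at h
  rw [h, Real.sqrt_mul_self (norm_nonneg _)]

variable {E : Type*} [AddCommGroup E] [Module A E] (hE : HilbertModuleStruct A E)

lemma inner_zero_zero : hE.inner 0 0 = 0 := by
  have h := hE.add_left 0 0 0
  rw [add_zero] at h
  exact add_eq_left.mp h.symm

lemma inner_smul_smul (a : A) (x : E) :
    hE.inner (a • x) (a • x) = a * star a * hE.inner x x := by
  rw [hE.smul_left, ← hE.star_inner, hE.smul_left, star_mul, hE.star_inner]
  ring

lemma nrm_smul_alg (r : ℝ) (x : E) :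
    hE.nrm ((algebraMap ℝ A r) • x) = |r| * hE.nrm x := by
  unfold HilbertModuleStruct.nrm
  rw [inner_smul_smul, alg_selfAdjoint, ← map_mul, Algebra.algebraMap_eq_smul_one,
    smul_mul_assoc, one_mul, norm_smul, Real.sqrt_mul (norm_nonneg _), Real.norm_eq_abs,
    abs_mul_self r, Real.sqrt_mul_self_eq_abs]

lemma nrm_nonneg (x : E) : 0 ≤ hE.nrm x := Real.sqrt_nonneg _

lemma nrm_sq (x : E) : ‖hE.inner x x‖ = hE.nrm x ^ 2 := by
  rw [HilbertModuleStruct.nrm, Real.sq_sqrt (norm_nonneg _)]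

end AuxLemmas

/-- If `b` is the least upper bound in `A` of
`{√⟪Tx,Tx⟫ : ⟪x,x⟫ ≤ 1}` for a bounded `A`-linear map `T` between Hilbert modules, then
`‖b‖ = ‖T‖`, the operator norm of `T`. -/
theorem norm_lub_eq_opNorm {A : Type*} [CommCStarAlgebra A] [PartialOrder A]
    [StarOrderedRing A] {E F : Type*} [AddCommGroup E] [Module A E] [AddCommGroup F]
    [Module A F] (hE : HilbertModuleStruct A E) (hF : HilbertModuleStruct A F)
    (T : E →ₗ[A] F) (hT : ∃ C : ℝ, 0 ≤ C ∧ ∀ x : E, hF.nrm (T x) ≤ C * hE.nrm x)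
    (b : A)
    (hb : IsLUB {a : A | ∃ x : E, hE.inner x x ≤ 1 ∧
      a = CFC.sqrt (hF.inner (T x) (T x))} b) :
    ‖b‖ = opNorm hE hF T := by
  obtain ⟨C₀, hC₀, hC₀x⟩ := hT
  rcases subsingleton_or_nontrivial A with hA | hA
  · -- degenerate case: A is trivial
    have hb0 : ‖b‖ = 0 := by rw [Subsingleton.elim b 0, norm_zero]
    have hnrm : ∀ x : E, hE.nrm x = 0 := fun x => by
      rw [HilbertModuleStruct.nrm, Subsingleton.elim (hE.inner x x) 0, norm_zero, Real.sqrt_zero]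
    have hnrmF : ∀ y : F, hF.nrm y = 0 := fun y => by
      rw [HilbertModuleStruct.nrm, Subsingleton.elim (hF.inner y y) 0, norm_zero, Real.sqrt_zero]
    have hset : {C : ℝ | 0 ≤ C ∧ ∀ x : E, hF.nrm (T x) ≤ C * hE.nrm x} = Set.Ici 0 := by
      ext C
      simp only [Set.mem_setOf_eq, Set.mem_Ici]
      constructor
      · exact fun h => h.1
      · intro h
        refine ⟨h, fun x => ?_⟩
        rw [hnrmF, hnrm, mul_zero]
    rw [hb0, opNorm, hset, csInf_Ici]
  -- main case: A nontrivial
  have hbnn : 0 ≤ b := by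
    refine hb.1 ?_
    exact ⟨0, by rw [inner_zero_zero]; exact zero_le_one,
      by rw [LinearMap.map_zero, inner_zero_zero, CFC.sqrt_zero]⟩
  -- key bound: for every x, nrm (T x) ≤ ‖b‖ * nrm x
  have key : ∀ x : E, hF.nrm (T x) ≤ ‖b‖ * hE.nrm x := by
    intro x
    by_cases hx : x = 0
    · subst hx
      rw [LinearMap.map_zero]
      have h0 : hF.nrm 0 = 0 := by
        rw [HilbertModuleStruct.nrm, inner_zero_zero, norm_zero, Real.sqrt_zero]
      rw [h0]
      exact mul_nonneg (norm_nonneg b) (nrm_nonneg hE 0)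
    · have hxpos : 0 < hE.nrm x := by
        rcases lt_or_eq_of_le (nrm_nonneg hE x) with h | h
        · exact h
        · exfalso
          apply hx
          apply hE.inner_self_eq_zero
          have : ‖hE.inner x x‖ = 0 := by rw [nrm_sq, ← h]; ring
          exact norm_eq_zero.mp this
      set r : ℝ := (hE.nrm x)⁻¹ with hr
      have hrpos : 0 < r := inv_pos.mpr hxpos
      set y : E := (algebraMap ℝ A r) • x with hy
      have hny : hE.nrm y = 1 := by
        rw [hy, nrm_smul_alg, abs_of_pos hrpos, hr, inv_mul_cancel₀ (ne_of_gt hxpos)]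
      have hyle : hE.inner y y ≤ 1 := by
        have h1 : hE.inner y y ≤ algebraMap ℝ A ‖hE.inner y y‖ :=
          IsSelfAdjoint.le_algebraMap_norm_self (IsSelfAdjoint.of_nonneg (hE.inner_self_nonneg y))
        have h2 : ‖hE.inner y y‖ = 1 := by rw [nrm_sq, hny]; ring
        rw [h2, map_one] at h1
        exact h1
      have hle : CFC.sqrt (hF.inner (T y) (T y)) ≤ b := hb.1 ⟨y, hyle, rfl⟩
      have hnle : hF.nrm (T y) ≤ ‖b‖ := by
        have h3 := CStarAlgebra.norm_le_norm_of_nonneg_of_le (CFC.sqrt_nonneg _) hle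
        rwa [norm_cfc_sqrt _ (hF.inner_self_nonneg _)] at h3
      have hTy : hF.nrm (T y) = r * hF.nrm (T x) := by
        rw [hy, LinearMap.map_smul, nrm_smul_alg, abs_of_pos hrpos]
      rw [hTy, hr] at hnle
      calc hF.nrm (T x) = (hE.nrm x)⁻¹ * hF.nrm (T x) * hE.nrm x := by
            field_simp
        _ ≤ ‖b‖ * hE.nrm x := mul_le_mul_of_nonneg_right hnle (le_of_lt hxpos)
  have hbdd : BddBelow {C : ℝ | 0 ≤ C ∧ ∀ x : E, hF.nrm (T x) ≤ C * hE.nrm x} :=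
    ⟨0, fun C hC => hC.1⟩
  have hne : {C : ℝ | 0 ≤ C ∧ ∀ x : E, hF.nrm (T x) ≤ C * hE.nrm x}.Nonempty :=
    ⟨C₀, hC₀, hC₀x⟩
  apply le_antisymm
  · -- ‖b‖ ≤ opNorm: ‖b‖ is a lower bound
    apply le_csInf hne
    intro C hC
    have hub : algebraMap ℝ A C ∈
        upperBounds {a : A | ∃ x : E, hE.inner x x ≤ 1 ∧
          a = CFC.sqrt (hF.inner (T x) (T x))} := by
      rintro a ⟨x, hx1, rfl⟩
      have hnx : hE.nrm x ≤ 1 := by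
        rw [HilbertModuleStruct.nrm, show (1 : ℝ) = Real.sqrt 1 by simp]
        apply Real.sqrt_le_sqrt
        calc ‖hE.inner x x‖ ≤ ‖(1 : A)‖ :=
              CStarAlgebra.norm_le_norm_of_nonneg_of_le (hE.inner_self_nonneg x) hx1
          _ = 1 := norm_one
      have h1 : CFC.sqrt (hF.inner (T x) (T x)) ≤
          algebraMap ℝ A ‖CFC.sqrt (hF.inner (T x) (T x))‖ :=
        IsSelfAdjoint.le_algebraMap_norm_self (IsSelfAdjoint.of_nonneg (CFC.sqrt_nonneg _))
      refine h1.trans (alg_mono ?_)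
      rw [norm_cfc_sqrt _ (hF.inner_self_nonneg _)]
      calc Real.sqrt ‖hF.inner (T x) (T x)‖ = hF.nrm (T x) := rfl
        _ ≤ C * hE.nrm x := hC.2 x
        _ ≤ C * 1 := mul_le_mul_of_nonneg_left hnx hC.1
        _ = C := mul_one C
    have hble : b ≤ algebraMap ℝ A C := hb.2 hub
    calc ‖b‖ ≤ ‖algebraMap ℝ A C‖ := CStarAlgebra.norm_le_norm_of_nonneg_of_le hbnn hble
      _ = C := by rw [norm_algebraMap', Real.norm_eq_abs, abs_of_nonneg hC.1]
  · exact csInf_le hbdd ⟨norm_nonneg b, key⟩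

end
end

section
/- Let A be a commutative unital C*-algebra, let E be a Hilbert module over A, and let y ∈ E. Then √⟪y,y⟫ is the least upper bound in A of the set {|⟪x,y⟫| : x ∈ E, ⟪x,x⟫ ≤ 1}. -/
noncomputable section

section AuxHM
open WeakDual
variable {A : Type*} [CommCStarAlgebra A] [PartialOrder A] [StarOrderedRing A]
  {E : Type*} [AddCommGroup E] [Module A E] (hE : HilbertModuleStruct A E)

lemma HM.smul_right (a : A) (x y : E) : hE.inner x (a • y) = star a * hE.inner x y := by
  rw [← hE.star_inner, hE.smul_left, star_mul, hE.star_inner, mul_comm]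

lemma HM.zero_left (z : E) : hE.inner 0 z = 0 := by
  have := hE.add_left 0 0 z
  rw [add_zero] at this
  have h2 : hE.inner 0 z + hE.inner 0 z = hE.inner 0 z + 0 := by rw [add_zero]; exact this.symm
  exact add_left_cancel h2

lemma HM.sub_left (x y z : E) : hE.inner (x - y) z = hE.inner x z - hE.inner y z := by
  have hneg : hE.inner (-y) z = -hE.inner y z := by
    have h := hE.smul_left (-1 : A) y z
    rw [neg_one_smul] at h
    rw [h, neg_one_mul]
  rw [sub_eq_add_neg, hE.add_left, hneg, sub_eq_add_neg]

lemma HM.sub_right (x y z : E) : hE.inner x (y - z) = hE.inner x y - hE.inner x z := by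
  rw [← hE.star_inner, HM.sub_left, star_sub, hE.star_inner, hE.star_inner]


variable {A : Type*} [CommCStarAlgebra A] [PartialOrder A] [StarOrderedRing A]
  {E : Type*} [AddCommGroup E] [Module A E] (hE : HilbertModuleStruct A E)

lemma char_nonneg' (χ : characterSpace ℂ A) {c : A} (hc : 0 ≤ c) :
    ∃ r : ℝ, 0 ≤ r ∧ χ c = (r : ℂ) := by
  have hsa : IsSelfAdjoint c := hc.isSelfAdjoint
  have hreal : (starRingEnd ℂ) (χ c) = χ c := by
    rw [show (starRingEnd ℂ) (χ c) = star (χ c) from rfl, ← map_star χ c, hsa.star_eq]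
  have him : (χ c).im = 0 := Complex.conj_eq_iff_im.mp hreal
  refine ⟨(χ c).re, ?_, ?_⟩
  · have hmem : ((χ c).re : ℂ) ∈ spectrum ℂ c := by
      have := AlgHom.apply_mem_spectrum (χ : A →ₐ[ℂ] ℂ) c
      rwa [show ((χ c).re : ℂ) = χ c from (Complex.re_add_im (χ c) ▸ by simp [him])]
    have : (χ c).re ∈ spectrum ℝ c := by
      rw [← spectrum.algebraMap_mem_iff ℂ]
      exact_mod_cast hmem
    exact spectrum_nonneg_of_nonneg hc this
  · rw [← Complex.re_add_im (χ c), him]; simp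

lemma HM.cs (χ : characterSpace ℂ A) (x y : E) :
    Complex.normSq (χ (hE.inner x y)) ≤
      (χ (hE.inner x x)).re * (χ (hE.inner y y)).re := by
  set c : ℂ := χ (hE.inner x y) with hc
  obtain ⟨X, hX0, hX⟩ := char_nonneg' χ (hE.inner_self_nonneg x)
  obtain ⟨Y, hY0, hY⟩ := char_nonneg' χ (hE.inner_self_nonneg y)
  rw [hX, hY]
  simp only [Complex.ofReal_re]
  set n : ℝ := Complex.normSq c with hn
  have hn0 : 0 ≤ n := Complex.normSq_nonneg c
  have key : ∀ t : ℝ, 0 ≤ X - 2 * t * n + t ^ 2 * n * Y := by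
    intro t
    set a : A := algebraMap ℂ A ((t : ℂ) * c) with ha
    have hP : hE.inner (x - a • y) (x - a • y)
        = hE.inner x x - star a * hE.inner x y - a * hE.inner y x
          + a * (star a * hE.inner y y) := by
      rw [HM.sub_left, HM.sub_right, HM.sub_right, HM.smul_right, hE.smul_left,
        hE.smul_left, HM.smul_right]
      ring
    obtain ⟨r, hr0, hr⟩ := char_nonneg' χ (hE.inner_self_nonneg (x - a • y))
    have hχa : χ a = (t : ℂ) * c := by
      rw [ha]; exact AlgHomClass.commutes χ _
    have hstar : χ (star a) = (t : ℂ) * (starRingEnd ℂ) c := by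
      rw [map_star, hχa]
      simp [map_mul]
    have hyx : χ (hE.inner y x) = (starRingEnd ℂ) c := by
      rw [← hE.star_inner, map_star]; rfl
    have heq : (r : ℂ) = (X : ℂ) - (t : ℂ) * (starRingEnd ℂ) c * c
        - (t : ℂ) * c * (starRingEnd ℂ) c
        + ((t : ℂ) * c) * ((t : ℂ) * (starRingEnd ℂ) c * (Y : ℂ)) := by
      rw [← hr, ← hX, ← hY, hP]
      simp only [map_add, map_sub, map_mul, hχa, hstar, hyx, ← hc]
    have heq2 : (r : ℂ) = ((X - 2 * t * n + t ^ 2 * n * Y : ℝ) : ℂ) := by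
      rw [heq]
      have h1 : c * (starRingEnd ℂ) c = (n : ℂ) := Complex.mul_conj c
      push_cast
      linear_combination ((t : ℂ) ^ 2 * (Y : ℂ) - 2 * (t : ℂ)) * h1
    have : r = X - 2 * t * n + t ^ 2 * n * Y := by exact_mod_cast heq2
    linarith
  by_contra hlt
  push_neg at hlt
  have hnpos : 0 < n := lt_of_le_of_lt (mul_nonneg hX0 hY0) hlt
  rcases eq_or_lt_of_le hY0 with hY | hY
  · have hk := key ((X + 1) / (2 * n))
    rw [← hY] at hk
    have hne : (2 * n) ≠ 0 := by positivity
    have h2 : 2 * ((X + 1) / (2 * n)) * n = X + 1 := by field_simp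
    nlinarith [hk, h2]
  · have hk := key (1 / Y)
    have hYne : Y ≠ 0 := ne_of_gt hY
    have hk' : 0 ≤ (X - 2 * (1 / Y) * n + (1 / Y) ^ 2 * n * Y) * Y :=
      mul_nonneg hk hY0
    have hexp : (X - 2 * (1 / Y) * n + (1 / Y) ^ 2 * n * Y) * Y = X * Y - n := by
      field_simp
      ring
    rw [hexp] at hk'
    linarith


variable {A : Type*} [CommCStarAlgebra A] [PartialOrder A] [StarOrderedRing A]
  {E : Type*} [AddCommGroup E] [Module A E] (hE : HilbertModuleStruct A E)

lemma char_mono (χ : characterSpace ℂ A) {a b : A} (hab : a ≤ b) :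
    (χ a).re ≤ (χ b).re := by
  obtain ⟨r, hr, hrc⟩ := char_nonneg' χ (sub_nonneg.mpr hab)
  have h2 : χ b - χ a = (r : ℂ) := by rw [← map_sub]; exact hrc
  have hre : (χ b).re - (χ a).re = r := by
    have := congrArg Complex.re h2; simpa using this
  linarith

lemma nonneg_of_char {c : A} (hsa : IsSelfAdjoint c)
    (h : ∀ χ : characterSpace ℂ A, 0 ≤ (χ c).re) : 0 ≤ c := by
  rw [StarOrderedRing.nonneg_iff_spectrum_nonneg (R := ℝ) c hsa]
  intro x hx
  have hmem : (x : ℂ) ∈ spectrum ℂ c := by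
    rw [show ((x : ℝ) : ℂ) = algebraMap ℝ ℂ x from rfl, spectrum.algebraMap_mem_iff]
    exact hx
  obtain ⟨χ, hχ⟩ := WeakDual.CharacterSpace.mem_spectrum_iff_exists.mp hmem
  have := h χ
  rw [hχ] at this
  simpa using this

lemma le_of_char {a b : A} (ha : IsSelfAdjoint a) (hb : IsSelfAdjoint b)
    (h : ∀ χ : characterSpace ℂ A, (χ a).re ≤ (χ b).re) : a ≤ b := by
  rw [← sub_nonneg]
  refine nonneg_of_char (hb.sub ha) fun χ => ?_
  have := h χ
  simp only [map_sub, Complex.sub_re]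
  linarith

lemma char_sqrt (χ : characterSpace ℂ A) {c : A} (hc : 0 ≤ c) :
    ∃ s : ℝ, 0 ≤ s ∧ χ c = (s : ℂ) ∧ χ (CFC.sqrt c) = ((Real.sqrt s : ℝ) : ℂ) := by
  obtain ⟨s, hs, hsc⟩ := char_nonneg' χ hc
  obtain ⟨r, hr, hrc⟩ := char_nonneg' χ (CFC.sqrt_nonneg (a := c))
  refine ⟨s, hs, hsc, ?_⟩
  have hsq : CFC.sqrt c ^ 2 = c := CFC.sq_sqrt c hc
  have h2 : (χ (CFC.sqrt c)) ^ 2 = χ c := by rw [← map_pow, hsq]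
  rw [hrc, hsc] at h2
  have hr2 : r ^ 2 = s := by exact_mod_cast h2
  rw [hrc]
  norm_cast
  rw [← hr2, Real.sqrt_sq hr]

theorem aux_isLUB (y : E) :
    IsLUB {a : A | ∃ x : E, hE.inner x x ≤ 1 ∧
        a = CFC.sqrt (star (hE.inner x y) * hE.inner x y)}
      (CFC.sqrt (hE.inner y y)) := by
  set a₀ : A := hE.inner y y with ha₀
  have ha₀0 : 0 ≤ a₀ := hE.inner_self_nonneg y
  constructor
  · -- upper bound
    rintro a ⟨x, hxx, rfl⟩
    set c' : A := hE.inner x y with hc'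
    have h0 : 0 ≤ star c' * c' := star_mul_self_nonneg c'
    refine le_of_char ((CFC.sqrt_nonneg (a := _)).isSelfAdjoint) ((CFC.sqrt_nonneg (a := _)).isSelfAdjoint)
      fun χ => ?_
    obtain ⟨s₁, hs₁0, hs₁, hs₁sqrt⟩ := char_sqrt χ h0
    obtain ⟨s, hs0, hsv, hssqrt⟩ := char_sqrt χ ha₀0
    rw [hs₁sqrt, hssqrt, Complex.ofReal_re, Complex.ofReal_re]
    refine Real.sqrt_le_sqrt ?_
    have hns : (s₁ : ℂ) = Complex.normSq (χ c') := by
      rw [← hs₁, map_mul, map_star]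
      exact (Complex.normSq_eq_conj_mul_self (z := χ c')).symm
    have hns' : s₁ = Complex.normSq (χ c') := by exact_mod_cast hns
    have hcs := HM.cs hE χ x y
    have hx1 : (χ (hE.inner x x)).re ≤ 1 := by
      have := char_mono χ hxx
      simpa using this
    have hx0 : 0 ≤ (χ (hE.inner x x)).re := by
      obtain ⟨u, hu0, hu⟩ := char_nonneg' χ (hE.inner_self_nonneg x)
      rw [hu]; simpa using hu0
    have hsre : (χ (hE.inner y y)).re = s := by rw [hsv]; simp
    rw [hsre] at hcs
    calc s₁ = Complex.normSq (χ c') := hns'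
      _ ≤ (χ (hE.inner x x)).re * s := hcs
      _ ≤ 1 * s := by nlinarith
      _ = s := one_mul s
  · -- least upper bound
    rintro b hb
    have h01 : (0 : A) ≤ 1 := by simpa using star_mul_self_nonneg (1 : A)
    have hb0 : 0 ≤ b := by
      have hmem : (0 : A) ∈ {a : A | ∃ x : E, hE.inner x x ≤ 1 ∧
          a = CFC.sqrt (star (hE.inner x y) * hE.inner x y)} := by
        refine ⟨0, ?_, ?_⟩
        · rw [HM.zero_left]; exact h01
        · rw [HM.zero_left]; simp [CFC.sqrt_zero]
      exact hb hmem
    refine le_of_char ((CFC.sqrt_nonneg (a := _)).isSelfAdjoint) hb0.isSelfAdjoint fun χ => ?_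
    obtain ⟨s, hs0, hsv, hssqrt⟩ := char_sqrt χ ha₀0
    rw [hssqrt, Complex.ofReal_re]
    have hspec : ∀ t ∈ spectrum ℝ a₀, 0 ≤ t := fun t ht =>
      spectrum_nonneg_of_nonneg ha₀0 ht
    have key : ∀ ε : ℝ, 0 < ε → s / Real.sqrt (s + ε) ≤ (χ b).re := by
      intro ε hε
      set f : ℝ → ℝ := fun t => (Real.sqrt (t + ε))⁻¹ with hf
      have hfc : ContinuousOn f (spectrum ℝ a₀) := by
        apply ContinuousOn.inv₀
        · exact (Real.continuous_sqrt.comp (continuous_add_right ε)).continuousOn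
        · intro t ht
          have := hspec t ht
          positivity
      have hgc : ContinuousOn (fun t => f t * t) (spectrum ℝ a₀) :=
        hfc.mul continuousOn_id
      set d : A := cfc f a₀ with hd
      have hdsa : IsSelfAdjoint d := cfc_predicate f a₀
      set xε : E := d • y with hxε
      have hda : d * a₀ = cfc (fun t => f t * t) a₀ := by
        rw [cfc_mul f (fun t : ℝ => t) a₀ hfc (continuous_id.continuousOn),
          cfc_id' ℝ a₀ ha₀0.isSelfAdjoint]
      have hinner_xy : hE.inner xε y = cfc (fun t => f t * t) a₀ := by
        rw [hxε, hE.smul_left, ← ha₀]; exact hda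
      have hinner_xx : hE.inner xε xε = cfc (fun t => f t * (f t * t)) a₀ := by
        rw [hxε, hE.smul_left, HM.smul_right, hdsa.star_eq, ← ha₀]
        rw [cfc_mul f (fun t => f t * t) a₀ hfc hgc, ← hda, ← hd]
      have hle1 : hE.inner xε xε ≤ 1 := by
        rw [hinner_xx, ← cfc_one ℝ a₀ ha₀0.isSelfAdjoint]
        refine cfc_mono fun t ht => ?_
        have ht0 := hspec t ht
        have htpos : 0 < t + ε := by linarith
        have hsq : Real.sqrt (t + ε) * Real.sqrt (t + ε) = t + ε :=
          Real.mul_self_sqrt htpos.le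
        have hsqrtpos : 0 < Real.sqrt (t + ε) := Real.sqrt_pos.mpr htpos
        rw [hf]
        simp only [Pi.one_apply]
        rw [show (Real.sqrt (t + ε))⁻¹ * ((Real.sqrt (t + ε))⁻¹ * t)
            = t / (t + ε) by rw [← mul_assoc, ← mul_inv, hsq, inv_mul_eq_div]]
        rw [div_le_one htpos]
        linarith
      have hc'0 : 0 ≤ hE.inner xε y := by
        rw [hinner_xy]
        refine cfc_nonneg fun t ht => ?_
        have ht0 := hspec t ht
        have : 0 ≤ f t := by rw [hf]; positivity
        positivity
      have hmem : hE.inner xε y ∈ {a : A | ∃ x : E, hE.inner x x ≤ 1 ∧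
          a = CFC.sqrt (star (hE.inner x y) * hE.inner x y)} := by
        refine ⟨xε, hle1, ?_⟩
        rw [hc'0.isSelfAdjoint.star_eq, CFC.sqrt_mul_self _ hc'0]
      have hble := char_mono χ (hb hmem)
      -- compute (χ (hE.inner xε y)).re
      obtain ⟨r, hr0, hrχ⟩ := char_nonneg' χ hc'0
      have hidentity : hE.inner xε y * hE.inner xε y * (a₀ + algebraMap ℝ A ε)
          = a₀ * a₀ := by
        rw [hinner_xy]
        have h1 : a₀ + algebraMap ℝ A ε = cfc (fun t : ℝ => t + ε) a₀ := by
          rw [cfc_add (a := a₀) (fun t : ℝ => t) (fun _ => ε)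
            (continuous_id.continuousOn) continuousOn_const,
            cfc_id' ℝ a₀ ha₀0.isSelfAdjoint, cfc_const ε a₀ ha₀0.isSelfAdjoint]
        rw [h1, ← cfc_mul (fun t => f t * t) (fun t => f t * t) a₀ hgc hgc,
          ← cfc_mul (fun t => (f t * t) * (f t * t)) (fun t : ℝ => t + ε) a₀
            (hgc.mul hgc) (by fun_prop),
          show a₀ * a₀ = cfc (fun t : ℝ => t * t) a₀ by
            rw [cfc_mul (fun t : ℝ => t) (fun t : ℝ => t) a₀
              (continuous_id.continuousOn) (continuous_id.continuousOn),
              cfc_id' ℝ a₀ ha₀0.isSelfAdjoint]]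
        refine cfc_congr fun t ht => ?_
        have ht0 := hspec t ht
        have htpos : 0 < t + ε := by linarith
        have hsq : Real.sqrt (t + ε) * Real.sqrt (t + ε) = t + ε :=
          Real.mul_self_sqrt htpos.le
        have hsqrtne : Real.sqrt (t + ε) ≠ 0 := by positivity
        rw [hf]
        field_simp
        rw [Real.sq_sqrt htpos.le]
      have hrsq : r * r * (s + ε) = s * s := by
        have := congrArg (χ : A → ℂ) hidentity
        simp only [map_mul, map_add] at this
        rw [hrχ, hsv] at this
        have hεχ : χ (algebraMap ℝ A ε) = (ε : ℂ) := by
          rw [IsScalarTower.algebraMap_apply ℝ ℂ A]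
          exact AlgHomClass.commutes χ _
        rw [hεχ] at this
        exact_mod_cast this
      have hrval : r = s / Real.sqrt (s + ε) := by
        have hpos : 0 < s + ε := by linarith
        have hsqrtpos : 0 < Real.sqrt (s + ε) := Real.sqrt_pos.mpr hpos
        have hsq : Real.sqrt (s + ε) * Real.sqrt (s + ε) = s + ε :=
          Real.mul_self_sqrt hpos.le
        have h4 : 0 ≤ r * Real.sqrt (s + ε) := by positivity
        have h3 : (r * Real.sqrt (s + ε)) ^ 2 = s ^ 2 := by
          calc (r * Real.sqrt (s + ε)) ^ 2
              = r * r * (Real.sqrt (s + ε) * Real.sqrt (s + ε)) := by ring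
            _ = r * r * (s + ε) := by rw [hsq]
            _ = s * s := hrsq
            _ = s ^ 2 := by ring
        have h2 : r * Real.sqrt (s + ε) = s := by
          rw [← Real.sqrt_sq h4, h3, Real.sqrt_sq hs0]
        rw [eq_div_iff (ne_of_gt hsqrtpos)]
        exact h2
      have hrre : (χ (hE.inner xε y)).re = r := by rw [hrχ]; simp
      rw [hrre, hrval] at hble
      exact hble
    rcases eq_or_lt_of_le hs0 with hs | hs
    · rw [← hs, Real.sqrt_zero]
      obtain ⟨u, hu0, hu⟩ := char_nonneg' χ hb0
      rw [hu]; simpa using hu0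
    · have htend : Filter.Tendsto (fun ε : ℝ => s / Real.sqrt (s + ε))
          (nhdsWithin 0 (Set.Ioi 0)) (nhds (Real.sqrt s)) := by
        have hcont : ContinuousAt (fun ε : ℝ => s / Real.sqrt (s + ε)) 0 := by
          have hne : Real.sqrt (s + 0) ≠ 0 := by
            rw [add_zero]; positivity
          exact (continuousAt_const.div
            ((Real.continuous_sqrt.continuousAt).comp
              (by fun_prop)) hne)
        have hval : s / Real.sqrt (s + 0) = Real.sqrt s := by
          rw [add_zero, Real.div_sqrt]
        exact hval ▸ hcont.continuousWithinAt.tendsto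
      exact le_of_tendsto htend (Filter.eventually_of_mem self_mem_nhdsWithin
        fun ε hε => key ε hε)


end AuxHM

/-- In a Hilbert module over a commutative unital C*-algebra,
`√⟪y,y⟫` is the least upper bound in `A` of `{|⟪x,y⟫| : ⟪x,x⟫ ≤ 1}`,
where `|a| = √(a*a)`. -/
theorem isLUB_inner_abs {A : Type*} [CommCStarAlgebra A] [PartialOrder A]
    [StarOrderedRing A] {E : Type*} [AddCommGroup E] [Module A E]
    (hE : HilbertModuleStruct A E) (y : E) :
    IsLUB {a : A | ∃ x : E, hE.inner x x ≤ 1 ∧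
        a = CFC.sqrt (star (hE.inner x y) * hE.inner x y)}
      (CFC.sqrt (hE.inner y y)) :=
  aux_isLUB hE y

end
end

section
/- (Bessel inequality for suborthonormal systems) Let A be a commutative unital C*-algebra, let E be a Hilbert module over A, and let y₁, …, y_n ∈ E be a suborthonormal system, i.e., ⟪y_i, y_j⟫ = 0 for i ≠ j and each ⟪y_j, y_j⟫ is an idempotent of A. Then for every x ∈ E one has Σ_{j=1}^n ⟪x,y_j⟫·⟪x,y_j⟫* ≤ ⟪x,x⟫ in the order of A. -/
noncomputable section

namespace HilbertModuleStruct

variable {A : Type*} [CommCStarAlgebra A] [PartialOrder A] [StarOrderedRing A]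
  {E : Type*} [AddCommGroup E] [Module A E] (hE : HilbertModuleStruct A E)

/-- The inner product with fixed right argument, as an additive monoid hom. -/
def innerHom (z : E) : E →+ A :=
  AddMonoidHom.mk' (fun x => hE.inner x z) (fun x y => hE.add_left x y z)

lemma inner_sub_left (x y z : E) :
    hE.inner (x - y) z = hE.inner x z - hE.inner y z :=
  map_sub (hE.innerHom z) x y

lemma inner_sum_left {ι : Type*} (s : Finset ι) (f : ι → E) (z : E) :
    hE.inner (∑ i ∈ s, f i) z = ∑ i ∈ s, hE.inner (f i) z :=
  map_sum (hE.innerHom z) f s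

lemma inner_sub_right (x y z : E) :
    hE.inner x (y - z) = hE.inner x y - hE.inner x z := by
  rw [← hE.star_inner (y - z) x, hE.inner_sub_left, star_sub, hE.star_inner, hE.star_inner]

lemma inner_smul_right (a : A) (x y : E) :
    hE.inner x (a • y) = star a * hE.inner x y := by
  rw [← hE.star_inner (a • y) x, hE.smul_left, star_mul, hE.star_inner, mul_comm]

lemma inner_sum_right {ι : Type*} (s : Finset ι) (f : ι → E) (z : E) :
    hE.inner z (∑ i ∈ s, f i) = ∑ i ∈ s, hE.inner z (f i) := by
  rw [← hE.star_inner (∑ i ∈ s, f i) z, hE.inner_sum_left, star_sum]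
  simp only [hE.star_inner]

end HilbertModuleStruct

/-- **Bessel inequality.** For a suborthonormal system `y₁, …, yₙ` in a
Hilbert module over a commutative unital C*-algebra (pairwise orthogonal, each
`⟪yⱼ,yⱼ⟫` idempotent), one has `∑ⱼ ⟪x,yⱼ⟫ ⟪x,yⱼ⟫* ≤ ⟪x,x⟫`. -/
theorem bessel_suborthonormal {A : Type*} [CommCStarAlgebra A] [PartialOrder A]
    [StarOrderedRing A] {E : Type*} [AddCommGroup E] [Module A E]
    (hE : HilbertModuleStruct A E) {n : ℕ} (y : Fin n → E)
    (horth : ∀ i j, i ≠ j → hE.inner (y i) (y j) = 0)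
    (hidem : ∀ j, IsIdempotentElem (hE.inner (y j) (y j))) :
    ∀ x : E, ∑ j, hE.inner x (y j) * star (hE.inner x (y j)) ≤ hE.inner x x := by
  intro x
  set a : Fin n → A := fun j => hE.inner x (y j) with ha
  set p : Fin n → A := fun j => hE.inner (y j) (y j) with hp
  set s : E := ∑ j, a j • y j with hs
  have h1 : hE.inner s x = ∑ j, a j * star (a j) := by
    rw [hs, hE.inner_sum_left]
    refine Finset.sum_congr rfl fun j _ => ?_
    rw [hE.smul_left, ← hE.star_inner x (y j)]
  have h2 : hE.inner x s = ∑ j, a j * star (a j) := by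
    rw [← hE.star_inner s x, h1, star_sum]
    refine Finset.sum_congr rfl fun j _ => ?_
    rw [star_mul, star_star, mul_comm]
  have h3 : hE.inner s s = ∑ j, a j * star (a j) * p j := by
    rw [hs, hE.inner_sum_left]
    refine Finset.sum_congr rfl fun i _ => ?_
    rw [hE.smul_left, hE.inner_sum_right]
    rw [Finset.mul_sum, Finset.sum_eq_single i]
    · rw [hE.inner_smul_right, ← mul_assoc]
    · intro j _ hji
      rw [hE.inner_smul_right, horth i j (Ne.symm hji), mul_zero, mul_zero]
    · intro h; exact absurd (Finset.mem_univ i) h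
  have key : hE.inner x x - ∑ j, a j * star (a j)
      = hE.inner (x - s) (x - s) + ∑ j, a j * star (a j) * (1 - p j) := by
    rw [hE.inner_sub_left, hE.inner_sub_right, hE.inner_sub_right, h1, h2, h3]
    rw [show (∑ j, a j * star (a j) * (1 - p j))
        = (∑ j, a j * star (a j)) - ∑ j, a j * star (a j) * p j by
      rw [← Finset.sum_sub_distrib]
      exact Finset.sum_congr rfl fun j _ => by ring]
    ring
  rw [← sub_nonneg, key]
  refine add_nonneg (hE.inner_self_nonneg _) (Finset.sum_nonneg fun j _ => ?_)
  have hpj : (0 : A) ≤ 1 - p j := by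
    have hidem' : IsIdempotentElem (1 - p j) := (hidem j).one_sub
    have hsa : star (1 - p j) = 1 - p j := by
      have : star (p j) = p j := (IsSelfAdjoint.of_nonneg (hE.inner_self_nonneg (y j)))
      rw [star_sub, star_one, this]
    calc (0 : A) ≤ star (1 - p j) * (1 - p j) := star_mul_self_nonneg _
      _ = 1 - p j := by rw [hsa, hidem']
  have := star_left_conjugate_nonneg hpj (star (a j))
  rw [star_star] at this
  calc (0 : A) ≤ a j * (1 - p j) * star (a j) := this
    _ = a j * star (a j) * (1 - p j) := by ring


end
end

section
/- Let 𝕋 = ℝ/ℤ carry its Haar probability measure and let 𝕋² carry the product (Haar) probability measure. For α ∈ 𝕋 define φ : 𝕋² → 𝕋² by φ(y,z) = (y + α, z + y) (the skew torus map). Then φ preserves the measure on 𝕋², and for every f ∈ L²(𝕋²;ℂ) with f ∘ φ = f almost everywhere there exists g ∈ L²(𝕋;ℂ) with g(· + α) = g almost everywhere such that f(y,z) = g(y) for almost every (y,z) ∈ 𝕋². In other words, the extension of the rotation system (𝕋, y ↦ y+α) given by the first-coordinate projection from the skew torus is an ergodic extension. -/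
open MeasureTheory

namespace SkewTorusAux

open AddCircle Filter ENNReal NNReal

local notation "𝕋" => UnitAddCircle

noncomputable section

instance : IsProbabilityMeasure (volume : Measure 𝕋) := ⟨by simp⟩

lemma haar_eq : (haarAddCircle : Measure 𝕋) = volume := by
  rw [show (volume : Measure 𝕋) = ENNReal.ofReal 1 • haarAddCircle from
    volume_eq_smul_haarAddCircle]
  simp

lemma fourierCoeff_eq (h : 𝕋 → ℂ) (n : ℤ) :
    fourierCoeff h n = ∫ t, fourier (-n) t • h t ∂(volume : Measure 𝕋) := by
  rw [fourierCoeff, haar_eq]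

lemma fourier_apply_add (n : ℤ) (x y : 𝕋) :
    fourier n (x + y) = fourier n x * fourier n y := by
  simp only [fourier_apply, smul_add, toCircle_add, Circle.coe_mul]

lemma norm_fourier (n : ℤ) (x : 𝕋) : ‖(fourier n x : ℂ)‖ = 1 := by
  rw [fourier_apply, Circle.norm_coe]

lemma fourier_neg_neg (n : ℤ) (x : 𝕋) : fourier (-n) (-x) = fourier n x := by
  simp only [fourier_apply, smul_neg, neg_zsmul, neg_neg]

lemma fourierCoeff_congr_ae {h h' : 𝕋 → ℂ} (e : h =ᵐ[volume] h') (n : ℤ) :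
    fourierCoeff h n = fourierCoeff h' n := by
  rw [fourierCoeff_eq, fourierCoeff_eq]
  exact integral_congr_ae (e.mono fun x hx => by dsimp only; rw [hx])

/-- Translating a function multiplies its Fourier coefficients by a character value. -/
lemma fourierCoeff_comp_add (h : 𝕋 → ℂ) (a : 𝕋) (n : ℤ) :
    fourierCoeff (fun x => h (x + a)) n = fourier n a * fourierCoeff h n := by
  rw [fourierCoeff_eq, fourierCoeff_eq]
  have key : ∫ x, fourier (-n) x • h (x + a) ∂(volume : Measure 𝕋)
      = ∫ u, fourier (-n) (u - a) • h u ∂(volume : Measure 𝕋) := by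
    have := (measurePreserving_add_right (volume : Measure 𝕋) a).integral_comp
      (MeasurableEquiv.addRight a).measurableEmbedding
      (fun u => fourier (-n) (u - a) • h u)
    simp only [MeasurableEquiv.coe_addRight, add_sub_cancel_right] at this
    exact this
  rw [key]
  have step : ∀ u : 𝕋, (fourier (-n) (u - a) : ℂ) • h u
      = (fourier n a : ℂ) • ((fourier (-n) u : ℂ) • h u) := by
    intro u
    rw [sub_eq_add_neg, fourier_apply_add, fourier_neg_neg, smul_smul, mul_comm]
  rw [integral_congr_ae (Eventually.of_forall step), integral_smul, smul_eq_mul]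

/-- Multiplying by a character shifts the Fourier coefficients. -/
lemma fourierCoeff_fourier_mul (h : 𝕋 → ℂ) (k n : ℤ) :
    fourierCoeff (fun x => fourier k x * h x) n = fourierCoeff h (n - k) := by
  rw [fourierCoeff_eq, fourierCoeff_eq]
  congr 1; ext x
  simp only [smul_eq_mul, ← mul_assoc]
  congr 1
  rw [← fourier_add]
  congr 1
  ring_nf

lemma haar_ae {h h' : 𝕋 → ℂ} (e : h =ᵐ[haarAddCircle] h') : h =ᵐ[volume] h' := by
  rw [← haar_eq]; exact e

lemma memℒp_haar {h : 𝕋 → ℂ} (hh : MemLp h 2 volume) : MemLp h 2 haarAddCircle := by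
  rw [haar_eq]; exact hh

/-- Uniqueness: an `L²` function all of whose Fourier coefficients vanish is a.e. zero. -/
lemma ae_zero_of_fourierCoeff_eq_zero {h : 𝕋 → ℂ} (hh : MemLp h 2 volume)
    (h0 : ∀ n : ℤ, fourierCoeff h n = 0) : h =ᵐ[volume] 0 := by
  have hh' : MemLp h 2 haarAddCircle := memℒp_haar hh
  set H := hh'.toLp h with hH
  have hcoe : (H : 𝕋 → ℂ) =ᵐ[volume] h := haar_ae hh'.coeFn_toLp
  have hrepr : fourierBasis.repr H = 0 := by
    apply lp.ext; funext n
    rw [lp.coeFn_zero]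
    simp only [Pi.zero_apply]
    rw [fourierBasis_repr]
    rw [show fourierCoeff (H : 𝕋 → ℂ) n = fourierCoeff h n from
      fourierCoeff_congr_ae hcoe n]
    exact h0 n
  have : H = 0 := by
    have := fourierBasis.repr.injective (by rw [hrepr, map_zero] : fourierBasis.repr H = fourierBasis.repr 0)
    exact this
  have hz : (H : 𝕋 → ℂ) =ᵐ[haarAddCircle] 0 := by
    rw [this]; exact Lp.coeFn_zero _ _ _
  exact haar_ae (hh'.coeFn_toLp.symm.trans hz)

lemma summable_sq_fourierCoeff {h : 𝕋 → ℂ} (hh : MemLp h 2 volume) :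
    Summable fun n : ℤ => ‖fourierCoeff h n‖ ^ 2 := by
  have hh' : MemLp h 2 haarAddCircle := memℒp_haar hh
  set H := hh'.toLp h with hH
  have hmem : Memℓp (fun n => fourierBasis.repr H n) 2 := (fourierBasis.repr H).property
  have hs := hmem.summable (by norm_num : 0 < (2 : ℝ≥0∞).toReal)
  have : ∀ n : ℤ, ‖fourierBasis.repr H n‖ ^ ((2:ℝ≥0∞)).toReal = ‖fourierCoeff h n‖ ^ 2 := by
    intro n
    rw [fourierBasis_repr, fourierCoeff_congr_ae (haar_ae hh'.coeFn_toLp) n]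
    rw [ENNReal.toReal_ofNat, Real.rpow_two]
  exact hs.congr this

/-- If the squared norms are summable and the norm is invariant by shifting the index by
`n ≠ 0`, all terms vanish. -/
lemma vanish_of_shift {β : ℤ → ℂ} (hs : Summable fun m => ‖β m‖ ^ 2) {n : ℤ} (hn : n ≠ 0)
    (hrel : ∀ m, ‖β m‖ = ‖β (m - n)‖) (m0 : ℤ) : β m0 = 0 := by
  have key : ∀ k : ℕ, ‖β (m0 - (k : ℤ) * n)‖ = ‖β m0‖ := by
    intro k
    induction k with
    | zero => simp
    | succ k ih =>
      have : m0 - ((k : ℤ) + 1) * n = (m0 - (k : ℤ) * n) - n := by ring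
      rw [Nat.cast_succ, this, ← hrel (m0 - (k : ℤ) * n), ih]
  have hinj : Function.Injective fun k : ℕ => m0 - (k : ℤ) * n := by
    intro a b hab
    dsimp only at hab
    have h2 : (a : ℤ) * n = (b : ℤ) * n := by linarith
    exact_mod_cast mul_right_cancel₀ hn h2
  have hsum : Summable fun k : ℕ => ‖β m0‖ ^ 2 := by
    have := (hs.comp_injective hinj)
    exact this.congr fun k => by simp only [Function.comp_apply]; rw [key k]
  rw [summable_const_iff] at hsum
  simpa using hsum

lemma integral_fourier_eq_zero {m : ℤ} (hm : m ≠ 0) :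
    ∫ x : 𝕋, (fourier m x : ℂ) ∂(volume : Measure 𝕋) = 0 := by
  rw [← haar_eq]
  exact integral_eq_zero_of_add_right_eq_neg (fourier_add_half_inv_index hm one_pos)

lemma fourierCoeff_const (c : ℂ) (n : ℤ) :
    fourierCoeff (fun _ : 𝕋 => c) n = if n = 0 then c else 0 := by
  rw [fourierCoeff_eq]
  rw [show (fun t : 𝕋 => fourier (-n) t • c) = fun t : 𝕋 => (fourier (-n) t : ℂ) • c from rfl]
  rw [integral_smul_const]
  by_cases h : n = 0
  · subst h
    simp only [neg_zero, if_true]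
    have : ∀ x : 𝕋, (fourier (0:ℤ) x : ℂ) = 1 := fun x => fourier_zero
    rw [integral_congr_ae (Eventually.of_forall this), integral_const]
    simp
  · rw [if_neg h, integral_fourier_eq_zero (by simpa using h), zero_smul]

lemma integrable_fourier_smul {s : 𝕋 → ℂ} (hs : Integrable s volume) (n : ℤ) :
    Integrable (fun x => (fourier (-n) x : ℂ) • s x) volume := by
  simp only [smul_eq_mul]
  exact hs.bdd_mul (fourier (-n)).continuous.aestronglyMeasurable
    (c := 1) (Eventually.of_forall fun x => le_of_eq (norm_fourier _ _))

lemma fourierCoeff_sub {s t : 𝕋 → ℂ} (hs : Integrable s volume) (ht : Integrable t volume)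
    (n : ℤ) :
    fourierCoeff (fun x => s x - t x) n = fourierCoeff s n - fourierCoeff t n := by
  rw [fourierCoeff_eq, fourierCoeff_eq, fourierCoeff_eq, ← integral_sub
    (integrable_fourier_smul hs n) (integrable_fourier_smul ht n)]
  congr 1; ext x; rw [smul_sub]

lemma phi_mp (α : 𝕋) :
    MeasurePreserving (fun p : 𝕋 × 𝕋 => (p.1 + α, p.2 + p.1)) volume volume := by
  have h : MeasurePreserving
      (fun p : 𝕋 × 𝕋 => ((fun y => y + α) p.1, (fun y z => z + y) p.1 p.2))
      ((volume : Measure 𝕋).prod volume) ((volume : Measure 𝕋).prod volume) :=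
    (measurePreserving_add_right volume α).skew_product
      (by fun_prop)
      (Filter.Eventually.of_forall fun y => (measurePreserving_add_right volume y).map_eq)
  exact h

end

end SkewTorusAux

open SkewTorusAux AddCircle Filter

/-- The skew torus map `(y,z) ↦ (y + α, z + y)` on `𝕋²` preserves the
Haar probability measure, and every `L²`-function invariant under it factors (a.e.)
through the first coordinate via a rotation-invariant `L²`-function on `𝕋`; i.e. the skew
torus is an ergodic extension of the rotation by `α`. -/
theorem skew_torus_ergodic_extension (α : UnitAddCircle) :
    MeasurePreserving
      (fun p : UnitAddCircle × UnitAddCircle => (p.1 + α, p.2 + p.1))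
      volume volume ∧
    ∀ f : UnitAddCircle × UnitAddCircle → ℂ, MemLp f 2 volume →
      (fun p : UnitAddCircle × UnitAddCircle => f (p.1 + α, p.2 + p.1)) =ᵐ[volume] f →
      ∃ g : UnitAddCircle → ℂ, MemLp g 2 volume ∧
        (fun y => g (y + α)) =ᵐ[volume] g ∧
        f =ᵐ[volume] fun p => g p.1 := by
  classical
  refine ⟨phi_mp α, ?_⟩
  intro f hf hinv
  -- strongly measurable representative
  have hsm := hf.aestronglyMeasurable
  set f' := hsm.mk f with hf'def
  have hf'meas : StronglyMeasurable f' := hsm.stronglyMeasurable_mk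
  have hff' : f =ᵐ[volume] f' := hsm.ae_eq_mk
  have hf'2 : MemLp f' 2 volume := hf.ae_eq hff'
  -- fiberwise Fourier coefficients
  set b : ℤ → UnitAddCircle → ℂ := fun n y => fourierCoeff (fun z => f' (y, z)) n with hbdef
  have hbmeas : ∀ n : ℤ, StronglyMeasurable (b n) := by
    intro n
    have h1 : StronglyMeasurable fun p : UnitAddCircle × UnitAddCircle =>
        (fourier (-n) p.2 : ℂ) • f' p :=
      (((fourier (-n)).continuous.comp continuous_snd).stronglyMeasurable).smul hf'meas
    have h2 : StronglyMeasurable fun y => ∫ z, (fourier (-n) z : ℂ) • f' (y, z) ∂volume :=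
      h1.integral_prod_right'
    have : b n = fun y => ∫ z, (fourier (-n) z : ℂ) • f' (y, z) ∂volume := by
      funext y; rw [hbdef]; exact fourierCoeff_eq _ n
    rw [this]; exact h2
  -- integrability facts
  have hfsq : Integrable (fun p : UnitAddCircle × UnitAddCircle => ‖f' p‖ ^ 2)
      ((volume : Measure UnitAddCircle).prod volume) :=
    (memLp_two_iff_integrable_sq_norm hf'2.aestronglyMeasurable).mp hf'2
  have hslicesq : ∀ᵐ y ∂(volume : Measure UnitAddCircle),
      Integrable (fun z => ‖f' (y, z)‖ ^ 2) volume := hfsq.prod_right_ae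
  have hsliceL2 : ∀ᵐ y ∂(volume : Measure UnitAddCircle),
      MemLp (fun z => f' (y, z)) 2 volume := by
    filter_upwards [hslicesq] with y hy
    exact (memLp_two_iff_integrable_sq_norm
      (hf'meas.comp_measurable measurable_prodMk_left).aestronglyMeasurable).mpr hy
  have hslice1 : ∀ᵐ y ∂(volume : Measure UnitAddCircle),
      Integrable (fun z => f' (y, z)) volume := by
    filter_upwards [hsliceL2] with y hy
    exact hy.integrable one_le_two
  -- transferred invariance
  have hinv' : (fun p : UnitAddCircle × UnitAddCircle => f' (p.1 + α, p.2 + p.1))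
      =ᵐ[volume] f' := by
    have h1 := (phi_mp α).quasiMeasurePreserving.ae_eq hff'
    exact (h1.symm.trans hinv).trans hff'
  have hae : ∀ᵐ y ∂(volume : Measure UnitAddCircle),
      ∀ᵐ z ∂(volume : Measure UnitAddCircle), f' (y + α, z + y) = f' (y, z) :=
    Measure.ae_ae_of_ae_prod hinv'
  -- Claim 2 : the fiberwise coefficients satisfy a twisted invariance
  have claim2 : ∀ n : ℤ, ∀ᵐ y ∂(volume : Measure UnitAddCircle),
      b n y = fourier n y * b n (y + α) := by
    intro n
    filter_upwards [hae] with y h1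
    have e1 : b n y = ∫ z, (fourier (-n) z : ℂ) • f' (y + α, z + y) ∂volume := by
      rw [hbdef]
      dsimp only
      rw [fourierCoeff_eq]
      exact integral_congr_ae (h1.mono fun z hz => by dsimp only; rw [hz])
    have e2 : ∫ z, (fourier (-n) z : ℂ) • f' (y + α, z + y) ∂volume
        = ∫ w, (fourier (-n) (w - y) : ℂ) • f' (y + α, w) ∂volume := by
      have := (measurePreserving_add_right (volume : Measure UnitAddCircle) y).integral_comp
        (MeasurableEquiv.addRight y).measurableEmbedding
        (fun w => (fourier (-n) (w - y) : ℂ) • f' (y + α, w))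
      simp only [MeasurableEquiv.coe_addRight, add_sub_cancel_right] at this
      exact this
    have e3 : ∫ w, (fourier (-n) (w - y) : ℂ) • f' (y + α, w) ∂volume
        = fourier n y * b n (y + α) := by
      have step : ∀ w : UnitAddCircle, (fourier (-n) (w - y) : ℂ) • f' (y + α, w)
          = (fourier n y : ℂ) • ((fourier (-n) w : ℂ) • f' (y + α, w)) := fun w => by
        rw [sub_eq_add_neg, fourier_apply_add, fourier_neg_neg, smul_smul, mul_comm]
      rw [integral_congr_ae (Eventually.of_forall step), integral_smul, smul_eq_mul]
      congr 1
      rw [hbdef]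
      dsimp only
      rw [fourierCoeff_eq]
    rw [e1, e2, e3]
  -- the fiberwise coefficients are L²
  have hbL2 : ∀ n : ℤ, MemLp (b n) 2 volume := by
    intro n
    have hbound : ∀ᵐ y ∂(volume : Measure UnitAddCircle),
        ‖b n y‖ ^ 2 ≤ ∫ z, ‖f' (y, z)‖ ^ 2 ∂volume := by
      filter_upwards [hslicesq] with y hy
      have hX : MemLp (fun z => ‖f' (y, z)‖) 2 (volume : Measure UnitAddCircle) := by
        refine (memLp_two_iff_integrable_sq
          (hf'meas.comp_measurable measurable_prodMk_left).aestronglyMeasurable.norm).mpr ?_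
        simpa using hy
      have hvar := ProbabilityTheory.variance_nonneg (fun z => ‖f' (y, z)‖) volume
      rw [ProbabilityTheory.variance_eq_sub hX] at hvar
      have hb_le : ‖b n y‖ ≤ ∫ z, ‖f' (y, z)‖ ∂volume := by
        rw [hbdef]
        dsimp only
        rw [fourierCoeff_eq]
        refine (norm_integral_le_integral_norm _).trans_eq ?_
        congr 1; funext z; rw [norm_smul, norm_fourier, one_mul]
      have h1 : ‖b n y‖ ^ 2 ≤ (∫ z, ‖f' (y, z)‖ ∂volume) ^ 2 :=
        pow_le_pow_left₀ (norm_nonneg _) hb_le 2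
      refine h1.trans ?_
      have h2 : (∫ z, ‖f' (y, z)‖ ∂volume) ^ 2
          ≤ ∫ z, ((fun w => ‖f' (y, w)‖) ^ 2) z ∂volume := by linarith
      refine h2.trans_eq ?_
      congr 1
    have hH : Integrable (fun y => ∫ z, ‖f' (y, z)‖ ^ 2 ∂volume) volume :=
      hfsq.integral_prod_left
    have hint : Integrable (fun y => ‖b n y‖ ^ 2) volume := by
      refine Integrable.mono' hH
        ((hbmeas n).measurable.norm.pow_const 2).aestronglyMeasurable ?_
      filter_upwards [hbound] with y hy
      rwa [Real.norm_eq_abs, abs_of_nonneg (by positivity)]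
    exact (memLp_two_iff_integrable_sq_norm (hbmeas n).aestronglyMeasurable).mpr hint
  -- Claim 3 : for n ≠ 0 the coefficients vanish
  have claim3 : ∀ n : ℤ, n ≠ 0 → b n =ᵐ[(volume : Measure UnitAddCircle)] (fun _ => 0) := by
    intro n hn
    have hrel : ∀ m : ℤ,
        fourierCoeff (b n) m = fourier (m - n) α * fourierCoeff (b n) (m - n) := by
      intro m
      rw [fourierCoeff_congr_ae (claim2 n) m]
      rw [show (fun y => (fourier n y : ℂ) * b n (y + α))
        = (fun y => (fourier n y : ℂ) * (fun u => b n (u + α)) y) from rfl]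
      rw [fourierCoeff_fourier_mul, fourierCoeff_comp_add]
    have hsum := summable_sq_fourierCoeff (hbL2 n)
    have hnorm : ∀ m, ‖fourierCoeff (b n) m‖ = ‖fourierCoeff (b n) (m - n)‖ := fun m => by
      rw [hrel m, norm_mul, norm_fourier, one_mul]
    exact ae_zero_of_fourierCoeff_eq_zero (hbL2 n) (vanish_of_shift hsum hn hnorm)
  refine ⟨b 0, hbL2 0, ?_, ?_⟩
  · filter_upwards [claim2 0] with y hy
    rw [hy, fourier_zero, one_mul]
  · have hvanish : ∀ᵐ y ∂(volume : Measure UnitAddCircle),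
        ∀ n : ℤ, n ≠ 0 → b n y = 0 := by
      rw [ae_all_iff]
      intro n
      by_cases hn : n = 0
      · exact Eventually.of_forall fun y h => absurd hn h
      · filter_upwards [claim3 n hn] with y hy _
        exact hy
    have hfiber : ∀ᵐ y ∂(volume : Measure UnitAddCircle),
        ∀ᵐ z ∂(volume : Measure UnitAddCircle), f' (y, z) = b 0 y := by
      filter_upwards [hvanish, hsliceL2, hslice1] with y hv hL2 h1
      have hdiff : MemLp (fun z => f' (y, z) - b 0 y) 2 (volume : Measure UnitAddCircle) :=
        hL2.sub (memLp_const _)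
      have hcoeffs : ∀ m : ℤ, fourierCoeff (fun z => f' (y, z) - b 0 y) m = 0 := by
        intro m
        rw [fourierCoeff_sub h1 (integrable_const _), fourierCoeff_const]
        by_cases hm : m = 0
        · subst hm
          rw [if_pos rfl]
          rw [show fourierCoeff (fun z => f' (y, z)) 0 = b 0 y from rfl, sub_self]
        · rw [if_neg hm, sub_zero]
          exact hv m hm
      have := ae_zero_of_fourierCoeff_eq_zero hdiff hcoeffs
      filter_upwards [this] with z hz
      rw [Pi.zero_apply] at hz
      exact sub_eq_zero.mp hz
    have hmeas_set : MeasurableSet {p : UnitAddCircle × UnitAddCircle | f' p = b 0 p.1} :=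
      hf'meas.measurableSet_eq_fun ((hbmeas 0).comp_measurable measurable_fst)
    have hprod : ∀ᵐ p ∂((volume : Measure UnitAddCircle).prod volume), f' p = b 0 p.1 :=
      (Measure.ae_prod_iff_ae_ae hmeas_set).mpr hfiber
    exact hff'.trans hprod
end
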